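/- arXiv:1602.02442 — 6 statements merged into one kernel-verified Lean document; each statement's English description precedes it below -/
import Mathlib

section
/- Let f : ℝ^d → ℝ be convex and L-smooth, and γ > 0. Define g_{γf}(x) = (1/γ)(x - prox_{γf}(x)). Then for all x, y ∈ ℝ^d, ⟨g_{γf}(x) - g_{γf}(y), x - y⟩ ≥ γ(1 + 1/(Lγ))‖g_{γf}(x) - g_{γf}(y)‖². -/
open RealInnerProductSpace

section Helpers

variable {E : Type*} [NormedAddCommGroup E] [InnerProductSpace ℝ E] [CompleteSpace E]

lemma inner_gradient_eq (f : E → ℝ) (z v : E) (h : DifferentiableAt ℝ f z) :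
    ⟪gradient f z, v⟫ = fderiv ℝ f z v := by
  simp [gradient, InnerProductSpace.toDual_symm_apply]

lemma hasDerivAt_line (f : E → ℝ) (hf : Differentiable ℝ f) (a v : E) (t : ℝ) :
    HasDerivAt (fun s : ℝ => f (a + s • v)) ⟪gradient f (a + t • v), v⟫ t := by
  have hc : HasDerivAt (fun s : ℝ => a + s • v) v t := by
    simpa using ((hasDerivAt_id t).smul_const v).const_add a
  have := ((hf (a + t • v)).hasFDerivAt).comp_hasDerivAt t hc
  rwa [inner_gradient_eq f _ v (hf _)]

lemma hasDerivAt_line' (f : E → ℝ) (G : E → E) (hG : ∀ z, HasGradientAt f (G z) z)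
    (a v : E) (t : ℝ) :
    HasDerivAt (fun s : ℝ => f (s • v + a)) ⟪G (t • v + a), v⟫ t := by
  have hc : HasDerivAt (fun s : ℝ => s • v + a) v t := by
    simpa using ((hasDerivAt_id t).smul_const v).add_const a
  have := ((hG (t • v + a)).hasFDerivAt).comp_hasDerivAt t hc
  simpa [InnerProductSpace.toDual_apply_apply, Function.comp_def] using this

lemma firstOrder (f : E → ℝ) (G : E → E) (hconv : ConvexOn ℝ Set.univ f)
    (hG : ∀ z, HasGradientAt f (G z) z) (a b : E) :
    f a + ⟪G a, b - a⟫ ≤ f b := by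
  set g : ℝ → ℝ := fun t => f (t • (b - a) + a) with hg
  have hgc : ConvexOn ℝ Set.univ g := by
    have := hconv.comp_affineMap (AffineMap.lineMap a b : ℝ →ᵃ[ℝ] E)
    simpa [hg, Function.comp_def, AffineMap.lineMap_apply_module'] using this
  have hd : HasDerivAt g ⟪G ((0:ℝ) • (b - a) + a), b - a⟫ 0 :=
    hasDerivAt_line' f G hG a (b - a) 0
  have hslope := hgc.le_slope_of_hasDerivAt (Set.mem_univ 0) (Set.mem_univ 1)
    zero_lt_one hd
  have h0 : g 0 = f a := by simp [hg]
  have h1 : g 1 = f b := by simp [hg]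
  rw [slope_def_field] at hslope
  simp only [zero_smul, zero_add] at hslope
  rw [h0, h1] at hslope
  have : ⟪G a, b - a⟫ ≤ f b - f a := by
    simpa using hslope
  linarith

lemma descent (f : E → ℝ) (G : E → E) {L : ℝ} (hL : 0 < L)
    (hG : ∀ z, HasGradientAt f (G z) z)
    (hlip : ∀ z w, ‖G z - G w‖ ≤ L * ‖z - w‖) (a b : E) :
    f b ≤ f a + ⟪G a, b - a⟫ + L / 2 * ‖b - a‖ ^ 2 := by
  set v : E := b - a with hv
  set φ : ℝ → ℝ := fun t =>
    L * ‖v‖ ^ 2 * t ^ 2 / 2 + t * ⟪G a, v⟫ + f a - f (t • v + a) with hφ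
  have hφd : ∀ t : ℝ, HasDerivAt φ
      (L * ‖v‖ ^ 2 * t + ⟪G a, v⟫ - ⟪G (t • v + a), v⟫) t := by
    intro t
    have h1 : HasDerivAt (fun t : ℝ => L * ‖v‖ ^ 2 * t ^ 2 / 2)
        (L * ‖v‖ ^ 2 * t) t := by
      have := ((hasDerivAt_pow 2 t).const_mul (L * ‖v‖ ^ 2)).div_const 2
      refine this.congr_deriv ?_
      ring
    have h2 : HasDerivAt (fun t : ℝ => t * ⟪G a, v⟫) ⟪G a, v⟫ t := by
      simpa using (hasDerivAt_id t).mul_const ⟪G a, v⟫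
    exact ((h1.add h2).add_const (f a)).sub (hasDerivAt_line' f G hG a v t)
  have hmono : MonotoneOn φ (Set.Icc (0:ℝ) 1) := by
    apply monotoneOn_of_deriv_nonneg (convex_Icc 0 1)
    · have : Differentiable ℝ φ := fun t => (hφd t).differentiableAt
      exact this.continuous.continuousOn
    · exact fun t _ => (hφd t).differentiableAt.differentiableWithinAt
    · intro t ht
      rw [(hφd t).deriv]
      have ht' : t ∈ Set.Ioo (0:ℝ) 1 := by
        simpa using ht
      have hb : ⟪G (t • v + a) - G a, v⟫ ≤ L * (t * ‖v‖ ^ 2) := by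
        calc ⟪G (t • v + a) - G a, v⟫ ≤ ‖G (t • v + a) - G a‖ * ‖v‖ :=
              real_inner_le_norm _ _
          _ ≤ L * ‖t • v + a - a‖ * ‖v‖ := by
              have := hlip (t • v + a) a
              nlinarith [norm_nonneg v]
          _ = L * (t * ‖v‖ ^ 2) := by
              rw [add_sub_cancel_right, norm_smul]
              simp [abs_of_pos ht'.1]
              ring
      rw [inner_sub_left] at hb
      nlinarith
  have h01 := hmono (Set.left_mem_Icc.2 zero_le_one) (Set.right_mem_Icc.2 zero_le_one) zero_le_one
  have hφ0 : φ 0 = 0 := by simp [hφ]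
  have hφ1 : φ 1 = L * ‖v‖ ^ 2 / 2 + ⟪G a, v⟫ + f a - f b := by
    simp [hφ, hv]
  rw [hφ0, hφ1] at h01
  linarith

lemma lowerBound (f : E → ℝ) (G : E → E) {L : ℝ} (hL : 0 < L)
    (hconv : ConvexOn ℝ Set.univ f)
    (hG : ∀ z, HasGradientAt f (G z) z)
    (hlip : ∀ z w, ‖G z - G w‖ ≤ L * ‖z - w‖) (a b : E) :
    f a + ⟪G a, b - a⟫ + 1 / (2 * L) * ‖G b - G a‖ ^ 2 ≤ f b := by
  set h : E → ℝ := fun z => f z - ⟪G a, z⟫ with hh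
  set Gh : E → E := fun z => G z - G a with hGh'
  have hGh : ∀ z, HasGradientAt h (Gh z) z := by
    intro z
    have h1 : HasFDerivAt (fun z : E => ⟪G a, z⟫)
        (InnerProductSpace.toDual ℝ E (G a)) z :=
      (InnerProductSpace.toDual ℝ E (G a)).hasFDerivAt
    have h2 := (hG z).hasFDerivAt.sub h1
    rw [hasGradientAt_iff_hasFDerivAt]
    simp only [hGh', map_sub]
    exact h2
  have hconvh : ConvexOn ℝ Set.univ h := by
    refine ⟨convex_univ, fun z _ w _ p q hp hq hpq => ?_⟩
    have := hconv.2 (Set.mem_univ z) (Set.mem_univ w) hp hq hpq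
    simp only [smul_eq_mul] at this
    simp only [hh, smul_eq_mul, inner_add_right, real_inner_smul_right]
    linarith
  have hliph : ∀ z w, ‖Gh z - Gh w‖ ≤ L * ‖z - w‖ := by
    intro z w
    simpa [hGh', sub_sub_sub_cancel_right] using hlip z w
  set c : E := b - (1 / L) • Gh b with hc
  have hmin : h a ≤ h c := by
    have := firstOrder h Gh hconvh hGh a c
    simpa [hGh'] using this
  have hdesc : h c ≤ h b - 1 / (2 * L) * ‖Gh b‖ ^ 2 := by
    have := descent h Gh hL hGh hliph b c
    have hcb : c - b = -((1 / L) • Gh b) := by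
      rw [hc]; abel
    rw [hcb] at this
    have e1 : ⟪Gh b, -((1 / L) • Gh b)⟫ = -(1 / L) * ‖Gh b‖ ^ 2 := by
      rw [inner_neg_right, real_inner_smul_right, real_inner_self_eq_norm_sq]
      ring
    have e2 : ‖-((1 / L) • Gh b)‖ ^ 2 = (1 / L) ^ 2 * ‖Gh b‖ ^ 2 := by
      rw [norm_neg, norm_smul, Real.norm_eq_abs,
        abs_of_pos (by positivity : (0:ℝ) < 1 / L)]
      ring
    rw [e1, e2] at this
    have : h c ≤ h b + (-(1 / L) * ‖Gh b‖ ^ 2) + L / 2 * ((1 / L) ^ 2 * ‖Gh b‖ ^ 2) := this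
    have hLne : L ≠ 0 := ne_of_gt hL
    calc h c ≤ h b + (-(1 / L) * ‖Gh b‖ ^ 2) + L / 2 * ((1 / L) ^ 2 * ‖Gh b‖ ^ 2) := this
      _ = h b - 1 / (2 * L) * ‖Gh b‖ ^ 2 := by field_simp; ring
  have hfinal : h a ≤ h b - 1 / (2 * L) * ‖Gh b‖ ^ 2 := le_trans hmin hdesc
  simp only [hh, hGh'] at hfinal
  have : ⟪G a, b⟫ - ⟪G a, a⟫ = ⟪G a, b - a⟫ := (inner_sub_right _ _ _).symm
  linarith

lemma coco (f : E → ℝ) (G : E → E) {L : ℝ} (hL : 0 < L)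
    (hconv : ConvexOn ℝ Set.univ f)
    (hG : ∀ z, HasGradientAt f (G z) z)
    (hlip : ∀ z w, ‖G z - G w‖ ≤ L * ‖z - w‖) (a b : E) :
    (1 / L) * ‖G a - G b‖ ^ 2 ≤ ⟪G a - G b, a - b⟫ := by
  have h1 := lowerBound f G hL hconv hG hlip a b
  have h2 := lowerBound f G hL hconv hG hlip b a
  have e1 : ⟪G a, b - a⟫ + ⟪G b, a - b⟫ = -⟪G a - G b, a - b⟫ := by
    rw [inner_sub_left]
    have : (b - a : E) = -(a - b) := by abel
    rw [this, inner_neg_right]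
    ring
  have e2 : ‖G b - G a‖ = ‖G a - G b‖ := norm_sub_rev _ _
  rw [e2] at h1
  have hE : (1:ℝ) / L * ‖G a - G b‖ ^ 2
      = 1 / (2 * L) * ‖G a - G b‖ ^ 2 + 1 / (2 * L) * ‖G a - G b‖ ^ 2 := by
    field_simp
    ring
  rw [hE]
  linarith

lemma prox_gradient (γ : ℝ) (hγ : 0 < γ) (f : E → ℝ) (hdiff : Differentiable ℝ f)
    (x p : E) (hp : ∀ y, γ * f p + ‖x - p‖ ^ 2 / 2 ≤ γ * f y + ‖x - y‖ ^ 2 / 2) :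
    gradient f p = (1 / γ) • (x - p) := by
  set F : E → ℝ := fun y => γ * f y + ‖x - y‖ ^ 2 / 2 with hF'
  have hloc : IsLocalMin F p := Filter.Eventually.of_forall hp
  have hq : HasFDerivAt (fun y : E => ‖x - y‖ ^ 2)
      (2 • (innerSL ℝ (x - p)).comp (-(ContinuousLinearMap.id ℝ E))) p :=
    ((hasFDerivAt_id p).const_sub x).norm_sq
  have hf1 : HasFDerivAt (fun y => γ * f y) (γ • fderiv ℝ f p) p :=
    ((hdiff p).hasFDerivAt).const_mul γ
  have hFeq : F = fun y => γ * f y + (2:ℝ)⁻¹ • ‖x - y‖ ^ 2 := by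
    funext y
    simp only [hF', smul_eq_mul]
    ring
  have hFd : HasFDerivAt F
      (γ • fderiv ℝ f p + (2:ℝ)⁻¹ • (2 • (innerSL ℝ (x - p)).comp
        (-(ContinuousLinearMap.id ℝ E)))) p := by
    rw [hFeq]
    exact hf1.add (hq.const_smul (2:ℝ)⁻¹)
  have hD := hloc.fderiv_eq_zero
  rw [hFd.fderiv] at hD
  have hv : ∀ v : E, γ * ⟪gradient f p, v⟫ - ⟪x - p, v⟫ = 0 := by
    intro v
    have := ContinuousLinearMap.ext_iff.mp hD v
    simp only [ContinuousLinearMap.add_apply, ContinuousLinearMap.smul_apply,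
      ContinuousLinearMap.comp_apply, ContinuousLinearMap.neg_apply,
      ContinuousLinearMap.coe_id', id, innerSL_apply_apply, ContinuousLinearMap.zero_apply,
      smul_eq_mul, two_smul] at this
    rw [← inner_gradient_eq f p v (hdiff p)] at this
    rw [inner_neg_right] at this
    linarith
  set w : E := γ • gradient f p - (x - p) with hw
  have hw0 : w = 0 := by
    have h1 : ⟪w, w⟫ = 0 := by
      have := hv w
      rw [hw, inner_sub_left, real_inner_smul_left]
      linarith
    exact inner_self_eq_zero.mp h1
  have : γ • gradient f p = x - p := by
    have := sub_eq_zero.mp hw0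
    exact this
  rw [← this, smul_smul]
  rw [one_div, inv_mul_cancel₀ (ne_of_gt hγ), one_smul]


end Helpers

/-- `p` is the proximal point `prox_{γ f}(x)`. -/
def IsProx {d : ℕ} (γ : ℝ) (f : EuclideanSpace ℝ (Fin d) → ℝ)
    (x p : EuclideanSpace ℝ (Fin d)) : Prop :=
  ∀ y, γ * f p + ‖x - p‖ ^ 2 / 2 ≤ γ * f y + ‖x - y‖ ^ 2 / 2

theorem prox_grad_map_cocoercive {d : ℕ} (L γ : ℝ) (hL : 0 < L) (hγ : 0 < γ)
    (f : EuclideanSpace ℝ (Fin d) → ℝ)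
    (hconv : ConvexOn ℝ Set.univ f)
    (hdiff : Differentiable ℝ f)
    (hlip : LipschitzWith (Real.toNNReal L) (fun z => gradient f z))
    (x y px py : EuclideanSpace ℝ (Fin d))
    (hpx : IsProx γ f x px) (hpy : IsProx γ f y py) :
    ⟪(1 / γ) • (x - px) - (1 / γ) • (y - py), x - y⟫ ≥
      γ * (1 + 1 / (L * γ)) * ‖(1 / γ) • (x - px) - (1 / γ) • (y - py)‖ ^ 2 := by
  set G : EuclideanSpace ℝ (Fin d) → EuclideanSpace ℝ (Fin d) := fun z => gradient f z with hG'
  have hG : ∀ z, HasGradientAt f (G z) z := fun z => (hdiff z).hasGradientAt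
  have hlipn : ∀ z w, ‖G z - G w‖ ≤ L * ‖z - w‖ := by
    intro z w
    have := hlip.dist_le_mul z w
    rwa [dist_eq_norm, dist_eq_norm, Real.coe_toNNReal L hL.le] at this
  set u : EuclideanSpace ℝ (Fin d) := (1 / γ) • (x - px) with hu
  set v : EuclideanSpace ℝ (Fin d) := (1 / γ) • (y - py) with hv
  have hGx : G px = u := prox_gradient γ hγ f hdiff x px hpx
  have hGy : G py = v := prox_gradient γ hγ f hdiff y py hpy
  have hco : (1 / L) * ‖u - v‖ ^ 2 ≤ ⟪u - v, px - py⟫ := by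
    have := coco f G hL hconv hG hlipn px py
    rwa [hGx, hGy] at this
  have hγne : γ ≠ 0 := ne_of_gt hγ
  have hxe : γ • u = x - px := by
    rw [hu, smul_smul, mul_one_div, div_self hγne, one_smul]
  have hye : γ • v = y - py := by
    rw [hv, smul_smul, mul_one_div, div_self hγne, one_smul]
  have hxy : x - y = (px - py) + γ • (u - v) := by
    rw [smul_sub, hxe, hye]
    abel
  have hexp : ⟪u - v, x - y⟫ = ⟪u - v, px - py⟫ + γ * ‖u - v‖ ^ 2 := by
    rw [hxy, inner_add_right, real_inner_smul_right, real_inner_self_eq_norm_sq]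
  have hcoef : γ * (1 + 1 / (L * γ)) = γ + 1 / L := by
    field_simp
  rw [ge_iff_le, hcoef, hexp]
  nlinarith [hco]
end

section
/- Let j be a uniformly random index in {1,…,n}, and let g_1,…,g_n and g_1*,…,g_n* be fixed vectors in ℝ^d with Σ_{i=1}^n g_i* = 0. Let x, x* ∈ ℝ^d and γ > 0. Then E⟨γ[g_j - (1/n)Σ_i g_i] - γ g_j*, (x - x*) + γ[g_j - (1/n)Σ_i g_i] - γ g_j*⟩ ≤ γ² (1/n) Σ_{i=1}^n ‖g_i - g_i*‖². -/
open RealInnerProductSpace Finset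

theorem inner_product_bound {d n : ℕ} (hn : 0 < n) (γ : ℝ) (hγ : 0 < γ)
    (g gs : Fin n → EuclideanSpace ℝ (Fin d))
    (hsum : ∑ i, gs i = 0)
    (x xs : EuclideanSpace ℝ (Fin d)) :
    (1 / (n : ℝ)) * ∑ j,
        ⟪γ • (g j - (1 / (n : ℝ)) • ∑ i, g i) - γ • gs j,
          (x - xs) + γ • (g j - (1 / (n : ℝ)) • ∑ i, g i) - γ • gs j⟫ ≤
      γ ^ 2 * ((1 / (n : ℝ)) * ∑ i, ‖g i - gs i‖ ^ 2) := by
  have hn' : (n : ℝ) ≠ 0 := by positivity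
  set G : EuclideanSpace ℝ (Fin d) := (1 / (n : ℝ)) • ∑ i, g i with hG
  set a : Fin n → EuclideanSpace ℝ (Fin d) := fun i => g i - gs i with ha
  have hsa : ∑ i, a i = ∑ i, g i := by
    simp [ha, Finset.sum_sub_distrib, hsum]
  have hnG : (n : ℝ) • G = ∑ i, a i := by
    rw [hsa, hG, smul_smul]
    field_simp
    rw [one_smul]
  have hv : ∀ j, γ • (g j - G) - γ • gs j = γ • (a j - G) := by
    intro j; simp only [ha]; module
  have key : ∀ j, ⟪γ • (g j - G) - γ • gs j, (x - xs) + γ • (g j - G) - γ • gs j⟫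
      = ⟪γ • (a j - G), x - xs⟫ + ‖γ • (a j - G)‖ ^ 2 := by
    intro j
    have h1 : (x - xs) + γ • (g j - G) - γ • gs j
        = (x - xs) + (γ • (g j - G) - γ • gs j) := by abel
    rw [h1, hv j, inner_add_right, real_inner_self_eq_norm_sq]
  have hcast : (n : ℕ) • G = (n : ℝ) • G := (Nat.cast_smul_eq_nsmul ℝ n G).symm
  have hsum0 : ∑ j, γ • (a j - G) = (0 : EuclideanSpace ℝ (Fin d)) := by
    rw [← Finset.smul_sum, Finset.sum_sub_distrib, Finset.sum_const, Finset.card_univ,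
      Fintype.card_fin, hcast, hnG, sub_self, smul_zero]
  have hinner0 : ∑ j, ⟪γ • (a j - G), x - xs⟫ = 0 := by
    rw [← sum_inner, hsum0, inner_zero_left]
  have hnorm : ∀ j, ‖γ • (a j - G)‖ ^ 2 = γ ^ 2 * ‖a j - G‖ ^ 2 := by
    intro j
    rw [norm_smul, mul_pow, Real.norm_eq_abs, sq_abs]
  have hvar : ∑ j, ‖a j - G‖ ^ 2 ≤ ∑ j, ‖a j‖ ^ 2 := by
    have expand : ∀ j, ‖a j - G‖ ^ 2 = ‖a j‖ ^ 2 - 2 * ⟪a j, G⟫ + ‖G‖ ^ 2 := by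
      intro j; rw [norm_sub_sq_real]
    calc ∑ j, ‖a j - G‖ ^ 2
        = ∑ j, ‖a j‖ ^ 2 - 2 * ⟪∑ j, a j, G⟫ + (n : ℝ) * ‖G‖ ^ 2 := by
          simp only [expand]
          rw [Finset.sum_add_distrib, Finset.sum_sub_distrib, ← Finset.mul_sum, sum_inner,
            Finset.sum_const, Finset.card_univ, Fintype.card_fin, nsmul_eq_mul]
      _ = ∑ j, ‖a j‖ ^ 2 - (n : ℝ) * ‖G‖ ^ 2 := by
          rw [← hnG, real_inner_smul_left, real_inner_self_eq_norm_sq]; ring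
      _ ≤ ∑ j, ‖a j‖ ^ 2 := by
          have hnpos : (0:ℝ) ≤ (n:ℝ) := by positivity
          nlinarith [mul_nonneg hnpos (sq_nonneg ‖G‖)]
  calc (1 / (n : ℝ)) * ∑ j, ⟪γ • (g j - G) - γ • gs j, (x - xs) + γ • (g j - G) - γ • gs j⟫
      = (1 / (n : ℝ)) * (γ ^ 2 * ∑ j, ‖a j - G‖ ^ 2) := by
        simp only [key]
        rw [Finset.sum_add_distrib, hinner0, zero_add]
        congr 1
        rw [Finset.mul_sum]
        exact Finset.sum_congr rfl (fun j _ => hnorm j)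
    _ ≤ (1 / (n : ℝ)) * (γ ^ 2 * ∑ j, ‖a j‖ ^ 2) := by
        have h1 : (0:ℝ) ≤ 1 / (n:ℝ) := by positivity
        have h2 : (0:ℝ) ≤ γ ^ 2 := sq_nonneg γ
        exact mul_le_mul_of_nonneg_left (mul_le_mul_of_nonneg_left hvar h2) h1
    _ = γ ^ 2 * ((1 / (n : ℝ)) * ∑ i, ‖g i - gs i‖ ^ 2) := by
        simp only [ha]; ring
end

section
/- Let 0 < μ < L, n ≥ 1 an integer, γ = √((n-1)² + 4nL/μ)/(2Ln) - (1 - 1/n)/(2L), c = 1/(μL), α = 1/(1+μγ), and κ = μγ/(1+μγ). Then αγ² + κc - c/n ≤ 0 and c/n - αγ² - αγ/L ≤ 0. -/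
theorem step_size_conditions (μ L : ℝ) (n : ℕ) (hμ : 0 < μ) (hμL : μ < L) (hn : 1 ≤ n)
    (γ c α κ : ℝ)
    (hγ : γ = Real.sqrt (((n : ℝ) - 1) ^ 2 + 4 * n * L / μ) / (2 * L * n)
        - (1 - 1 / (n : ℝ)) / (2 * L))
    (hc : c = 1 / (μ * L))
    (hα : α = 1 / (1 + μ * γ))
    (hκ : κ = μ * γ / (1 + μ * γ)) :
    α * γ ^ 2 + κ * c - c / n ≤ 0 ∧ c / n - α * γ ^ 2 - α * γ / L ≤ 0 := by
  have hL : (0:ℝ) < L := hμ.trans hμL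
  have hnR : (1:ℝ) ≤ (n:ℝ) := by exact_mod_cast hn
  have hn0 : (0:ℝ) < (n:ℝ) := by linarith
  set s := Real.sqrt (((n : ℝ) - 1) ^ 2 + 4 * n * L / μ) with hs
  have harg : (0:ℝ) ≤ ((n : ℝ) - 1) ^ 2 + 4 * n * L / μ := by positivity
  have hs2 : s ^ 2 = ((n : ℝ) - 1) ^ 2 + 4 * n * L / μ := Real.sq_sqrt harg
  have hsge : (n:ℝ) - 1 ≤ s := by
    have : Real.sqrt (((n:ℝ) - 1) ^ 2) ≤ s := by
      apply Real.sqrt_le_sqrt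
      have : (0:ℝ) ≤ 4 * n * L / μ := by positivity
      linarith
    rwa [Real.sqrt_sq (by linarith)] at this
  -- γ ≥ 0
  have hγeq : γ = (s - ((n:ℝ) - 1)) / (2 * L * n) := by
    rw [hγ]; field_simp
  have hγ0 : 0 ≤ γ := by
    rw [hγeq]
    apply div_nonneg (by linarith) (by positivity)
  -- key quadratic identity
  have hkey : L * n * γ ^ 2 + ((n:ℝ) - 1) * γ = 1 / μ := by
    have h2 : 2 * L * n * γ = s - ((n:ℝ) - 1) := by
      rw [hγeq]; field_simp
    have hsquare : (2 * L * n * γ + ((n:ℝ) - 1)) ^ 2 = s ^ 2 := by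
      rw [h2]; ring
    rw [hs2] at hsquare
    have hthis : 4 * L * n * (L * n * γ ^ 2 + ((n:ℝ) - 1) * γ) = 4 * n * L / μ := by
      nlinarith [hsquare]
    have h4 : (4 * L * (n:ℝ)) ≠ 0 := by positivity
    apply mul_left_cancel₀ h4
    rw [hthis]; field_simp
  have hkey' : μ * L * n * γ ^ 2 + μ * ((n:ℝ) - 1) * γ = 1 := by
    have := congrArg (fun x => μ * x) hkey
    simp only [mul_one_div, div_self hμ.ne'] at this
    linarith [this]
  have hd : (0:ℝ) < 1 + μ * γ := by nlinarith
  subst hc hα hκ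
  constructor
  · have : 1 / (1 + μ * γ) * γ ^ 2 + μ * γ / (1 + μ * γ) * (1 / (μ * L)) - 1 / (μ * L) / n = 0 := by
      field_simp
      linear_combination hkey'
    linarith
  · have : 1 / (μ * L) / n - 1 / (1 + μ * γ) * γ ^ 2 - 1 / (1 + μ * γ) * γ / L = 0 := by
      field_simp
      linear_combination (-1) * hkey'
    linarith
end

section
/- Consider one step of Point-SAGA: given x^k ∈ ℝ^d and stored vectors g_1^k,…,g_n^k, pick j uniformly at random, set z_j^k = x^k + γ[g_j^k - (1/n)Σ_i g_i^k], x^{k+1} = prox_{γ f_j}(z_j^k), g_j^{k+1} = (1/γ)(z_j^k - x^{k+1}), and g_i^{k+1} = g_i^k for i ≠ j. Suppose each f_i : ℝ^d → ℝ is L-smooth and μ-strongly convex with 0 < μ < L. Define the Lyapunov function T^k = (c/n)Σ_{i=1}^n ‖g_i^k - g_i*‖² + ‖x^k - x*‖² with c = 1/(μL), where x* is the minimizer of f = (1/n)Σ_i f_i and g_i* = ∇f_i(x*) (so Σ_i g_i* = 0). Then with step size γ = √((n-1)² + 4nL/μ)/(2Ln) - (1 - 1/n)/(2L), the conditional expectation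 over the choice of j satisfies E[T^{k+1}] ≤ (1 - κ) T^k with κ = μγ/(1+μγ). -/
open RealInnerProductSpace Finset

theorem grad_le_aux {dd : ℕ} {f : EuclideanSpace ℝ (Fin dd) → ℝ}
    (hf : ConvexOn ℝ Set.univ f) {x g : EuclideanSpace ℝ (Fin dd)}
    (hg : HasGradientAt f g x) (y : EuclideanSpace ℝ (Fin dd)) :
    f x + ⟪g, y - x⟫ ≤ f y := by
  set φ : ℝ → ℝ := fun t => f (x + t • (y - x)) with hφdef
  have hφconv : ConvexOn ℝ Set.univ φ := by
    refine ⟨convex_univ, ?_⟩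
    intro s _ t _ a b ha hb hab
    obtain rfl : a = 1 - b := by linarith
    have key : x + ((1-b) * s + b * t) • (y - x)
        = (1-b) • (x + s • (y - x)) + b • (x + t • (y - x)) := by module
    simp only [hφdef, smul_eq_mul, key]
    exact hf.2 (Set.mem_univ _) (Set.mem_univ _) ha hb hab
  have h1 : HasDerivAt (fun t : ℝ => x + t • (y - x)) (y - x) 0 := by
    simpa using ((hasDerivAt_id (0:ℝ)).smul_const (y - x)).const_add x
  have hd : HasDerivAt φ ⟪g, y - x⟫ 0 := by
    have hg' : HasFDerivAt f ((InnerProductSpace.toDual ℝ (EuclideanSpace ℝ (Fin dd))) g)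
        (x + (0:ℝ) • (y - x)) := by simpa using hg.hasFDerivAt
    have h2 := hg'.comp_hasDerivAt 0 h1
    simpa [hφdef, Function.comp_def, InnerProductSpace.toDual_apply_apply] using h2
  have hs := hφconv.le_slope_of_hasDerivAt (Set.mem_univ (0:ℝ)) (Set.mem_univ 1) one_pos hd
  have h0 : φ 0 = f x := by simp [hφdef]
  have h1' : φ 1 = f y := by simp [hφdef]
  rw [slope_def_field, h0, h1'] at hs
  simp only [sub_zero, div_one] at hs
  linarith [hs]

theorem hasGradientAt_half_sq {dd : ℕ} (v p : EuclideanSpace ℝ (Fin dd)) :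
    HasGradientAt (fun y => ‖v - y‖ ^ 2 / 2) (p - v) p := by
  rw [hasGradientAt_iff_hasFDerivAt]
  have h1 : HasFDerivAt (fun y : EuclideanSpace ℝ (Fin dd) => v - y)
      (-(ContinuousLinearMap.id ℝ _)) p := (hasFDerivAt_id p).const_sub v
  have h2 := ((h1.inner ℝ h1).const_mul ((2:ℝ)⁻¹))
  have heq : (fun y : EuclideanSpace ℝ (Fin dd) => ‖v - y‖ ^ 2 / 2)
      = fun y => (2:ℝ)⁻¹ * (⟪v - y, v - y⟫ : ℝ) := by
    funext y; rw [real_inner_self_eq_norm_sq]; ring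
  rw [heq]
  refine HasFDerivAt.congr_fderiv h2 ?_
  ext w
  simp only [InnerProductSpace.toDual_apply_apply, ContinuousLinearMap.smul_apply,
    ContinuousLinearMap.comp_apply, ContinuousLinearMap.prod_apply, ContinuousLinearMap.neg_apply,
    ContinuousLinearMap.id_apply, fderivInnerCLM_apply, inner_sub_left, inner_sub_right,
    inner_neg_left, inner_neg_right, smul_eq_mul]
  rw [real_inner_comm w v, real_inner_comm w p]
  ring

/-- Gradient of `fun y => f y + (m/2)‖y‖²` style combinations: we provide
`fun y => f y - (m/2)*‖y‖^2` has gradient `∇f x - m • x`. -/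
theorem hasGradientAt_sub_quad {dd : ℕ} {f : EuclideanSpace ℝ (Fin dd) → ℝ}
    (hdf : Differentiable ℝ f) (m : ℝ) (x : EuclideanSpace ℝ (Fin dd)) :
    HasGradientAt (fun y => f y - m / 2 * ‖y‖ ^ 2) (gradient f x - m • x) x := by
  rw [hasGradientAt_iff_hasFDerivAt]
  have hq := (hasGradientAt_half_sq (0 : EuclideanSpace ℝ (Fin dd)) x).hasFDerivAt.const_mul m
  have hf := (hdf x).hasGradientAt.hasFDerivAt
  have h := hf.sub hq
  have heq : (fun y : EuclideanSpace ℝ (Fin dd) => f y - m / 2 * ‖y‖ ^ 2)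
      = fun y => f y - m * (‖(0 : EuclideanSpace ℝ (Fin dd)) - y‖ ^ 2 / 2) := by
    funext y; rw [zero_sub, norm_neg]; ring
  rw [heq]
  refine HasFDerivAt.congr_fderiv h ?_
  simp only [map_sub, map_smul, sub_zero]

theorem hasGradientAt_quad_sub {dd : ℕ} {f : EuclideanSpace ℝ (Fin dd) → ℝ}
    (hdf : Differentiable ℝ f) (m : ℝ) (x : EuclideanSpace ℝ (Fin dd)) :
    HasGradientAt (fun y => m / 2 * ‖y‖ ^ 2 - f y) (m • x - gradient f x) x := by
  rw [hasGradientAt_iff_hasFDerivAt]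
  have hq := (hasGradientAt_half_sq (0 : EuclideanSpace ℝ (Fin dd)) x).hasFDerivAt.const_mul m
  have hf := (hdf x).hasGradientAt.hasFDerivAt
  have h := hq.sub hf
  have heq : (fun y : EuclideanSpace ℝ (Fin dd) => m / 2 * ‖y‖ ^ 2 - f y)
      = fun y => m * (‖(0 : EuclideanSpace ℝ (Fin dd)) - y‖ ^ 2 / 2) - f y := by
    funext y; rw [zero_sub, norm_neg]; ring
  rw [heq]
  refine HasFDerivAt.congr_fderiv h ?_
  simp only [map_sub, map_smul, sub_zero]

theorem isProx_gradient_eq {dd : ℕ} {γ : ℝ} (hγ : 0 < γ)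
    {f : EuclideanSpace ℝ (Fin dd) → ℝ} (hdf : Differentiable ℝ f)
    {v p : EuclideanSpace ℝ (Fin dd)}
    (h : ∀ y, γ * f p + ‖v - p‖ ^ 2 / 2 ≤ γ * f y + ‖v - y‖ ^ 2 / 2) :
    γ • gradient f p = v - p := by
  have hloc : IsLocalMin (fun y => γ * f y + ‖v - y‖ ^ 2 / 2) p :=
    Filter.Eventually.of_forall h
  have hg1 := ((hdf p).hasGradientAt.hasFDerivAt).const_mul γ
  have hg2 := (hasGradientAt_half_sq v p).hasFDerivAt
  have h0 := hloc.hasFDerivAt_eq_zero (hg1.add hg2)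
  have h1 : (InnerProductSpace.toDual ℝ (EuclideanSpace ℝ (Fin dd)))
      (γ • gradient f p + (p - v)) = 0 := by
    rw [map_add, map_smul]; exact h0
  have h2 : γ • gradient f p + (p - v) = 0 :=
    (InnerProductSpace.toDual ℝ (EuclideanSpace ℝ (Fin dd))).map_eq_zero_iff.mp h1
  rw [add_eq_zero_iff_eq_neg] at h2
  rw [h2]; abel

theorem convexOn_of_inner_grad_mono {dd : ℕ} {h : EuclideanSpace ℝ (Fin dd) → ℝ}
    (hd : Differentiable ℝ h)
    (mono : ∀ a b : EuclideanSpace ℝ (Fin dd), 0 ≤ ⟪gradient h a - gradient h b, a - b⟫) :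
    ConvexOn ℝ Set.univ h := by
  refine ⟨convex_univ, ?_⟩
  intro p _ q _ a b ha hb hab
  set φ : ℝ → ℝ := fun t => h (p + t • (q - p)) with hφdef
  have hder : ∀ t : ℝ, HasDerivAt φ ⟪gradient h (p + t • (q - p)), q - p⟫ t := by
    intro t
    have h1 : HasDerivAt (fun u : ℝ => p + u • (q - p)) (q - p) t := by
      simpa using ((hasDerivAt_id t).smul_const (q - p)).const_add p
    have hg' : HasFDerivAt h ((InnerProductSpace.toDual ℝ (EuclideanSpace ℝ (Fin dd)))
        (gradient h (p + t • (q - p)))) (p + t • (q - p)) :=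
      (hd _).hasGradientAt.hasFDerivAt
    have h2 := hg'.comp_hasDerivAt t h1
    simpa [hφdef, Function.comp_def, InnerProductSpace.toDual_apply_apply] using h2
  have hdiff : Differentiable ℝ φ := fun t => (hder t).differentiableAt
  have hmono : Monotone (deriv φ) := by
    intro s t hst
    rw [(hder s).deriv, (hder t).deriv]
    rcases eq_or_lt_of_le hst with rfl | hlt
    · exact le_rfl
    · have hm := mono (p + t • (q - p)) (p + s • (q - p))
      have hv : (p + t • (q - p)) - (p + s • (q - p)) = (t - s) • (q - p) := by module
      rw [hv, inner_sub_left, real_inner_smul_right, real_inner_smul_right] at hm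
      nlinarith [hm]
  have hconvφ : ConvexOn ℝ Set.univ φ := hmono.convexOn_univ_of_deriv hdiff
  have hval := hconvφ.2 (Set.mem_univ (0:ℝ)) (Set.mem_univ (1:ℝ)) ha hb hab
  obtain rfl : a = 1 - b := by linarith
  have h0 : φ 0 = h p := by simp [hφdef]
  have h1' : φ 1 = h q := by simp [hφdef]
  have hval' : φ b ≤ (1-b) * h p + b * h q := by simpa [h0, h1'] using hval
  have hpt : (1-b) • p + b • q = p + b • (q - p) := by module
  rw [hpt]
  simpa [hφdef] using hval'

theorem strong_mono {dd : ℕ} {μ : ℝ} {f : EuclideanSpace ℝ (Fin dd) → ℝ}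
    (hconv : StrongConvexOn Set.univ μ f) (hdf : Differentiable ℝ f)
    (a b : EuclideanSpace ℝ (Fin dd)) :
    μ * ‖a - b‖ ^ 2 ≤ ⟪gradient f a - gradient f b, a - b⟫ := by
  have hcv : ConvexOn ℝ Set.univ (fun x => f x - μ / 2 * ‖x‖ ^ 2) :=
    strongConvexOn_iff_convex.mp hconv
  have h1 := grad_le_aux hcv (hasGradientAt_sub_quad hdf μ a) b
  have h2 := grad_le_aux hcv (hasGradientAt_sub_quad hdf μ b) a
  simp only [inner_sub_left, inner_sub_right, real_inner_smul_left] at h1 h2 ⊢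
  rw [norm_sub_sq_real]
  rw [real_inner_self_eq_norm_sq] at h1 h2
  have hc : (inner ℝ b a : ℝ) = inner ℝ a b := real_inner_comm a b
  rw [hc] at h2
  nlinarith [h1, h2]

theorem descent_lemma {dd : ℕ} {L : ℝ} (hL : 0 < L) {f : EuclideanSpace ℝ (Fin dd) → ℝ}
    (hdf : Differentiable ℝ f)
    (hlip : ∀ x y : EuclideanSpace ℝ (Fin dd),
      ‖gradient f x - gradient f y‖ ≤ L * ‖x - y‖)
    (x y : EuclideanSpace ℝ (Fin dd)) :
    f y ≤ f x + ⟪gradient f x, y - x⟫ + L / 2 * ‖y - x‖ ^ 2 := by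
  have hd2 : Differentiable ℝ (fun y : EuclideanSpace ℝ (Fin dd) => L / 2 * ‖y‖ ^ 2 - f y) :=
    fun x => (hasGradientAt_quad_sub hdf L x).differentiableAt
  have hgr : ∀ x : EuclideanSpace ℝ (Fin dd),
      gradient (fun y : EuclideanSpace ℝ (Fin dd) => L / 2 * ‖y‖ ^ 2 - f y) x
        = L • x - gradient f x := fun x => (hasGradientAt_quad_sub hdf L x).gradient
  have hcv2 : ConvexOn ℝ Set.univ (fun y : EuclideanSpace ℝ (Fin dd) => L / 2 * ‖y‖ ^ 2 - f y) := by
    refine convexOn_of_inner_grad_mono hd2 ?_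
    intro p q
    rw [hgr p, hgr q]
    have hkey : (L • p - gradient f p) - (L • q - gradient f q)
        = L • (p - q) - (gradient f p - gradient f q) := by module
    rw [hkey, inner_sub_left, real_inner_smul_left, real_inner_self_eq_norm_sq]
    have h1 := real_inner_le_norm (gradient f p - gradient f q) (p - q)
    have h2 := hlip p q
    nlinarith [norm_nonneg (p - q), norm_nonneg (gradient f p - gradient f q)]
  have h := grad_le_aux hcv2 (hasGradientAt_quad_sub hdf L x) y
  simp only [inner_sub_left, inner_sub_right, real_inner_smul_left] at h
  rw [norm_sub_sq_real]
  simp only [inner_sub_right]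
  rw [real_inner_self_eq_norm_sq] at h
  have hc := real_inner_comm x y
  nlinarith [h, hc]

theorem coco_half {dd : ℕ} {L : ℝ} (hL : 0 < L) {f : EuclideanSpace ℝ (Fin dd) → ℝ}
    (hcv : ConvexOn ℝ Set.univ f) (hdf : Differentiable ℝ f)
    (hlip : ∀ x y : EuclideanSpace ℝ (Fin dd),
      ‖gradient f x - gradient f y‖ ≤ L * ‖x - y‖)
    (a b : EuclideanSpace ℝ (Fin dd)) :
    f a + ⟪gradient f a, b - a⟫ + 1 / (2 * L) * ‖gradient f b - gradient f a‖ ^ 2 ≤ f b := by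
  have key := grad_le_aux hcv (hdf a).hasGradientAt
    (b - L⁻¹ • (gradient f b - gradient f a))
  have hdesc := descent_lemma hL hdf hlip b (b - L⁻¹ • (gradient f b - gradient f a))
  have hw1 : (b - L⁻¹ • (gradient f b - gradient f a)) - a
      = (b - a) - L⁻¹ • (gradient f b - gradient f a) := by abel
  have hw2 : (b - L⁻¹ • (gradient f b - gradient f a)) - b
      = -(L⁻¹ • (gradient f b - gradient f a)) := by abel
  rw [hw1] at key
  rw [hw2, norm_neg, norm_smul] at hdesc
  simp only [inner_sub_right, inner_neg_right, real_inner_smul_right] at key hdesc ⊢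
  rw [real_inner_self_eq_norm_sq] at key hdesc
  have habs : ‖L⁻¹‖ = L⁻¹ := Real.norm_of_nonneg (by positivity)
  rw [habs] at hdesc
  have hs : ‖gradient f b - gradient f a‖ ^ 2
      = ‖gradient f b‖ ^ 2 - 2 * ⟪gradient f b, gradient f a⟫ + ‖gradient f a‖ ^ 2 :=
    norm_sub_sq_real _ _
  have e1 : L / 2 * (L⁻¹ * ‖gradient f b - gradient f a‖) ^ 2
      = 1 / (2 * L) * ‖gradient f b - gradient f a‖ ^ 2 := by
    field_simp
  have hsL : L⁻¹ * ‖gradient f b - gradient f a‖ ^ 2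
      = L⁻¹ * ‖gradient f b‖ ^ 2 - 2 * (L⁻¹ * ⟪gradient f b, gradient f a⟫)
        + L⁻¹ * ‖gradient f a‖ ^ 2 := by rw [hs]; ring
  have hcL : L⁻¹ * (⟪gradient f a, gradient f b⟫ : ℝ)
      = L⁻¹ * ⟪gradient f b, gradient f a⟫ := by rw [real_inner_comm]
  have e2 : L⁻¹ * ‖gradient f b - gradient f a‖ ^ 2
      - 1 / (2 * L) * ‖gradient f b - gradient f a‖ ^ 2
      = 1 / (2 * L) * ‖gradient f b - gradient f a‖ ^ 2 := by field_simp; ring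
  have hgb2 : (⟪gradient f b, gradient f b⟫ : ℝ) = ‖gradient f b‖ ^ 2 :=
    real_inner_self_eq_norm_sq _
  nlinarith [key, hdesc, hsL, hcL, e1, e2, hgb2]

theorem coco_s8 {dd : ℕ} {L : ℝ} (hL : 0 < L) {f : EuclideanSpace ℝ (Fin dd) → ℝ}
    (hcv : ConvexOn ℝ Set.univ f) (hdf : Differentiable ℝ f)
    (hlip : ∀ x y : EuclideanSpace ℝ (Fin dd),
      ‖gradient f x - gradient f y‖ ≤ L * ‖x - y‖)
    (a b : EuclideanSpace ℝ (Fin dd)) :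
    ‖gradient f a - gradient f b‖ ^ 2 ≤ L * ⟪gradient f a - gradient f b, a - b⟫ := by
  have h1 := coco_half hL hcv hdf hlip a b
  have h2 := coco_half hL hcv hdf hlip b a
  have hn : ‖gradient f b - gradient f a‖ = ‖gradient f a - gradient f b‖ := norm_sub_rev _ _
  rw [hn] at h1
  simp only [inner_sub_left, inner_sub_right] at h1 h2 ⊢
  have hsum : 1 / L * ‖gradient f a - gradient f b‖ ^ 2
      ≤ ⟪gradient f a, a⟫ - ⟪gradient f a, b⟫ - ⟪gradient f b, a⟫ + ⟪gradient f b, b⟫ := by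
    have e : 1 / (2 * L) * ‖gradient f a - gradient f b‖ ^ 2
        + 1 / (2 * L) * ‖gradient f a - gradient f b‖ ^ 2
        = 1 / L * ‖gradient f a - gradient f b‖ ^ 2 := by field_simp; ring
    linarith [h1, h2, e]
  have hmul := mul_le_mul_of_nonneg_left hsum hL.le
  have e3 : L * (1 / L * ‖gradient f a - gradient f b‖ ^ 2)
      = ‖gradient f a - gradient f b‖ ^ 2 := by field_simp
  rw [e3] at hmul
  linarith [hmul]

theorem sum_grad_zero {dd n : ℕ} (hn : 0 < n) (f : Fin n → EuclideanSpace ℝ (Fin dd) → ℝ)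
    (hdf : ∀ i, Differentiable ℝ (f i)) (xstar : EuclideanSpace ℝ (Fin dd))
    (hmin : ∀ y, (1 / (n : ℝ)) * ∑ i, f i xstar ≤ (1 / (n : ℝ)) * ∑ i, f i y) :
    ∑ i, gradient (f i) xstar = 0 := by
  have hloc : IsLocalMin (fun y => (1 / (n : ℝ)) * ∑ i, f i y) xstar :=
    Filter.Eventually.of_forall hmin
  have hfd : HasFDerivAt (fun y => (1 / (n : ℝ)) * ∑ i, f i y)
      ((1 / (n : ℝ)) • ∑ i, (InnerProductSpace.toDual ℝ (EuclideanSpace ℝ (Fin dd)))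
        (gradient (f i) xstar)) xstar := by
    exact (HasFDerivAt.fun_sum fun i _ => ((hdf i) xstar).hasGradientAt.hasFDerivAt).const_mul _
  have h0 := hloc.hasFDerivAt_eq_zero hfd
  have h1 : (InnerProductSpace.toDual ℝ (EuclideanSpace ℝ (Fin dd)))
      ((1 / (n : ℝ)) • ∑ i, gradient (f i) xstar) = 0 := by
    rw [map_smul, map_sum]; exact h0
  have h2 := (InnerProductSpace.toDual ℝ (EuclideanSpace ℝ (Fin dd))).map_eq_zero_iff.mp h1
  have hne : (1 / (n : ℝ)) ≠ 0 := by
    have : (0:ℝ) < n := by exact_mod_cast hn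
    positivity
  exact (smul_eq_zero.mp h2).resolve_left hne

set_option maxHeartbeats 1000000 in
theorem point_saga_lyapunov_descent {d n : ℕ} (hn : 0 < n) (μ L : ℝ)
    (hμ : 0 < μ) (hμL : μ < L)
    (f : Fin n → EuclideanSpace ℝ (Fin d) → ℝ)
    (hconv : ∀ i, StrongConvexOn Set.univ μ (f i))
    (hdiff : ∀ i, Differentiable ℝ (f i))
    (hlip : ∀ i, LipschitzWith (Real.toNNReal L) (fun z => gradient (f i) z))
    (xstar : EuclideanSpace ℝ (Fin d))
    (hmin : ∀ y, (1 / (n : ℝ)) * ∑ i, f i xstar ≤ (1 / (n : ℝ)) * ∑ i, f i y)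
    (gstar : Fin n → EuclideanSpace ℝ (Fin d))
    (hgstar : ∀ i, gstar i = gradient (f i) xstar)
    (γ c κ : ℝ)
    (hγ : γ = Real.sqrt (((n : ℝ) - 1) ^ 2 + 4 * n * L / μ) / (2 * L * n)
        - (1 - 1 / (n : ℝ)) / (2 * L))
    (hc : c = 1 / (μ * L))
    (hκ : κ = μ * γ / (1 + μ * γ))
    (xk : EuclideanSpace ℝ (Fin d)) (gk : Fin n → EuclideanSpace ℝ (Fin d))
    (z : Fin n → EuclideanSpace ℝ (Fin d))
    (hz : ∀ j, z j = xk + γ • (gk j - (1 / (n : ℝ)) • ∑ i, gk i))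
    (xk1 : Fin n → EuclideanSpace ℝ (Fin d))
    (hxk1 : ∀ j, IsProx γ (f j) (z j) (xk1 j))
    (gk1 : Fin n → Fin n → EuclideanSpace ℝ (Fin d))
    (hgk1 : ∀ j, gk1 j j = (1 / γ) • (z j - xk1 j))
    (hgk1' : ∀ j i, i ≠ j → gk1 j i = gk i) :
    (1 / (n : ℝ)) * ∑ j,
        ((c / n) * ∑ i, ‖gk1 j i - gstar i‖ ^ 2 + ‖xk1 j - xstar‖ ^ 2) ≤
      (1 - κ) * ((c / n) * ∑ i, ‖gk i - gstar i‖ ^ 2 + ‖xk - xstar‖ ^ 2) := by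
  classical
  have hL : 0 < L := hμ.trans hμL
  have hN : (0:ℝ) < n := by exact_mod_cast hn
  have hN1 : (1:ℝ) ≤ n := by exact_mod_cast hn
  have hNne : (n:ℝ) ≠ 0 := ne_of_gt hN
  -- γ is positive and satisfies the key quadratic identity
  have harg : (0:ℝ) ≤ ((n : ℝ) - 1) ^ 2 + 4 * n * L / μ := by positivity
  have hs2 : (Real.sqrt (((n : ℝ) - 1) ^ 2 + 4 * n * L / μ)) ^ 2
      = ((n : ℝ) - 1) ^ 2 + 4 * n * L / μ := Real.sq_sqrt harg
  have hgt : ((n:ℝ) - 1) < Real.sqrt (((n : ℝ) - 1) ^ 2 + 4 * n * L / μ) := by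
    have hq : (0:ℝ) < 4 * n * L / μ := by positivity
    calc ((n:ℝ) - 1) = Real.sqrt (((n:ℝ)-1)^2) := (Real.sqrt_sq (by linarith)).symm
      _ < _ := Real.sqrt_lt_sqrt (sq_nonneg _) (by linarith)
  have hγeq : γ = (Real.sqrt (((n : ℝ) - 1) ^ 2 + 4 * n * L / μ) - ((n:ℝ)-1)) / (2 * L * n) := by
    rw [hγ]; field_simp
  have hγpos : 0 < γ := by rw [hγeq]; exact div_pos (by linarith) (by positivity)
  have key2 : μ * L * (n:ℝ) * γ ^ 2 + μ * ((n : ℝ) - 1) * γ = 1 := by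
    set s := Real.sqrt (((n : ℝ) - 1) ^ 2 + 4 * n * L / μ) with hsdef
    have hs2' : μ * s ^ 2 = μ * ((n:ℝ)-1)^2 + 4 * n * L := by
      rw [hs2]; field_simp
    have hγmul : 2 * L * (n:ℝ) * γ = s - ((n:ℝ)-1) := by
      rw [hγeq]; field_simp
    have key2m : 4*L*(n:ℝ)*(μ*L*(n:ℝ)*γ^2 + μ*((n:ℝ)-1)*γ) = 4*L*(n:ℝ)*1 := by
      linear_combination hs2' + μ*(2*L*(n:ℝ)*γ + ((n:ℝ)-1) + s) * hγmul
    exact mul_left_cancel₀ (by positivity) key2m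
  have hγne : γ ≠ 0 := ne_of_gt hγpos
  have hβ : 0 < 1 + μ * γ := by nlinarith [mul_pos hμ hγpos]
  have hμLn : (0:ℝ) < μ * L * (n:ℝ) := by positivity
  have e1 : (1 + μ*γ) * (c / (n:ℝ)) = γ^2 + γ/L := by
    have em : (μ*L*(n:ℝ)) * ((1 + μ*γ) * (c / (n:ℝ))) = (μ*L*(n:ℝ)) * (γ^2 + γ/L) := by
      rw [hc]; field_simp; linear_combination (-1) * key2
    exact mul_left_cancel₀ (ne_of_gt hμLn) em
  have e2' : (γ^2 + γ/L) * ((n:ℝ)-1) + γ^2 = c := by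
    have em : (μ*L*(n:ℝ)) * ((γ^2 + γ/L) * ((n:ℝ)-1) + γ^2) = (μ*L*(n:ℝ)) * c := by
      rw [hc]; field_simp; linear_combination key2
    exact mul_left_cancel₀ (ne_of_gt hμLn) em
  have hκ' : 1 - κ = 1/(1 + μ*γ) := by
    rw [hκ]; field_simp; ring
  -- pointwise Lipschitz bound on gradients
  have hlipp : ∀ i, ∀ a b : EuclideanSpace ℝ (Fin d),
      ‖gradient (f i) a - gradient (f i) b‖ ≤ L * ‖a - b‖ := by
    intro i a b
    have h := (hlip i).dist_le_mul a b
    rw [dist_eq_norm, dist_eq_norm] at h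
    simpa [Real.coe_toNNReal L hL.le] using h
  have hconvex : ∀ i, ConvexOn ℝ Set.univ (f i) := fun i =>
    UniformConvexOn.convexOn (hconv i) (Pi.le_def.mpr (fun r => by positivity))
  have hsumstar : ∑ i, gstar i = 0 := by
    have h := sum_grad_zero hn f hdiff xstar hmin
    calc ∑ i, gstar i = ∑ i, gradient (f i) xstar :=
          Finset.sum_congr rfl fun i _ => hgstar i
      _ = 0 := h
  have hprox : ∀ j, γ • gradient (f j) (xk1 j) = z j - xk1 j := fun j =>
    isProx_gradient_eq hγpos (hdiff j) (hxk1 j)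
  have hg1g : ∀ j, gk1 j j = gradient (f j) (xk1 j) := by
    intro j
    rw [hgk1 j, ← hprox j, smul_smul, one_div, inv_mul_cancel₀ hγne, one_smul]
  have hsm : ∀ j, μ * ‖xk1 j - xstar‖^2 ≤ ⟪gk1 j j - gstar j, xk1 j - xstar⟫ := by
    intro j; rw [hg1g j, hgstar j]
    exact strong_mono (hconv j) (hdiff j) _ _
  have hcc : ∀ j, ‖gk1 j j - gstar j‖^2 ≤ L * ⟪gk1 j j - gstar j, xk1 j - xstar⟫ := by
    intro j; rw [hg1g j, hgstar j]
    exact coco_s8 hL (hconvex j) (hdiff j) (hlipp j) _ _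
  have hP : ∀ j, (1+μ*γ) * ‖xk1 j - xstar‖^2 + (γ^2 + γ/L) * ‖gk1 j j - gstar j‖^2
      ≤ ‖(xk1 j - xstar) + γ • (gk1 j j - gstar j)‖^2 := by
    intro j
    rw [norm_add_sq_real, real_inner_smul_right, norm_smul, Real.norm_of_nonneg hγpos.le,
      mul_pow]
    have hcm := real_inner_comm (xk1 j - xstar) (gk1 j j - gstar j)
    have h1 := mul_le_mul_of_nonneg_left (hsm j) hγpos.le
    have h2' := mul_le_mul_of_nonneg_left (hcc j) (le_of_lt (div_pos hγpos hL))
    have e : γ/L*L = γ := div_mul_cancel₀ γ (ne_of_gt hL)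
    have h2'' : γ/L * ‖gk1 j j - gstar j‖^2
        ≤ γ * ⟪gk1 j j - gstar j, xk1 j - xstar⟫ := by
      calc γ/L * ‖gk1 j j - gstar j‖^2
          ≤ γ/L*(L*⟪gk1 j j - gstar j, xk1 j - xstar⟫) := h2'
        _ = (γ/L*L)*⟪gk1 j j - gstar j, xk1 j - xstar⟫ := by ring
        _ = γ*⟪gk1 j j - gstar j, xk1 j - xstar⟫ := by rw [e]
    nlinarith [h1, h2'', hcm]
  have E1 : ∀ j, z j - xstar - γ • gstar j
      = (xk1 j - xstar) + γ • (gk1 j j - gstar j) := by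
    intro j
    have h1 : γ • gk1 j j = z j - xk1 j := by rw [hg1g j]; exact hprox j
    rw [smul_sub, h1]; abel
  have E2 : ∀ j, z j - xstar - γ • gstar j
      = ((xk - xstar) - γ • ((1/(n:ℝ)) • ∑ i, gk i)) + γ • (gk j - gstar j) := by
    intro j
    rw [hz j, smul_sub, smul_sub]; abel
  set S := ∑ i, ‖gk i - gstar i‖^2 with hS
  set D := ∑ j, ‖gk1 j j - gstar j‖^2 with hD
  set X := ∑ j, ‖xk1 j - xstar‖^2 with hX
  set U := ‖xk - xstar‖^2 with hU
  set G := ∑ i, gk i with hG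
  set V := ∑ j, ‖z j - xstar - γ • gstar j‖^2 with hV
  have h1 : (1+μ*γ) * X + (γ^2+γ/L) * D ≤ V := by
    have hsum := Finset.sum_le_sum (fun j (_ : j ∈ (univ : Finset (Fin n))) => hP j)
    have hVr : V = ∑ j, ‖(xk1 j - xstar) + γ • (gk1 j j - gstar j)‖^2 := by
      rw [hV]; exact Finset.sum_congr rfl fun j _ => by rw [E1 j]
    rw [hVr]
    refine le_trans (le_of_eq ?_) hsum
    rw [hX, hD, Finset.mul_sum, Finset.mul_sum, ← Finset.sum_add_distrib]
  have h2 : V ≤ (n:ℝ) * U + γ^2 * S := by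
    have hVr : V = ∑ j, ‖((xk - xstar) - γ • ((1/(n:ℝ)) • G)) + γ • (gk j - gstar j)‖^2 := by
      rw [hV]; exact Finset.sum_congr rfl fun j _ => by rw [E2 j]
    have hexp : ∀ j : Fin n, ‖((xk - xstar) - γ • ((1/(n:ℝ)) • G)) + γ • (gk j - gstar j)‖^2
        = ‖(xk - xstar) - γ • ((1/(n:ℝ)) • G)‖^2
          + 2*γ*⟪(xk - xstar) - γ • ((1/(n:ℝ)) • G), gk j - gstar j⟫
          + γ^2*‖gk j - gstar j‖^2 := fun j => by
      rw [norm_add_sq_real, real_inner_smul_right, norm_smul,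
        Real.norm_of_nonneg hγpos.le, mul_pow]; ring
    have hsumG : ∑ j, (gk j - gstar j) = G := by
      rw [Finset.sum_sub_distrib, hsumstar, sub_zero]
    have hVval : V = (n:ℝ)*‖(xk - xstar) - γ • ((1/(n:ℝ)) • G)‖^2
        + 2*γ*⟪(xk - xstar) - γ • ((1/(n:ℝ)) • G), G⟫ + γ^2*S := by
      rw [hVr, Finset.sum_congr rfl (fun j _ => hexp j), Finset.sum_add_distrib,
        Finset.sum_add_distrib, Finset.sum_const, ← Finset.mul_sum, ← Finset.mul_sum,
        ← inner_sum, hsumG, hS]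
      simp [Finset.card_univ, nsmul_eq_mul]
    have hAip : ⟪(xk - xstar) - γ • ((1/(n:ℝ)) • G), G⟫
        = ⟪xk - xstar, G⟫ - γ*(1/(n:ℝ))*‖G‖^2 := by
      rw [inner_sub_left, smul_smul, real_inner_smul_left, real_inner_self_eq_norm_sq]
    have hA2 : ‖(xk - xstar) - γ • ((1/(n:ℝ)) • G)‖^2
        = U - 2*(γ*(1/(n:ℝ)))*⟪xk - xstar, G⟫ + (γ*(1/(n:ℝ)))^2*‖G‖^2 := by
      rw [smul_smul, norm_sub_sq_real, real_inner_smul_right, norm_smul,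
        Real.norm_of_nonneg (by positivity : (0:ℝ) ≤ γ*(1/(n:ℝ))), mul_pow, hU]
      ring
    have hfinal : V = (n:ℝ)*U - γ^2*(1/(n:ℝ))*‖G‖^2 + γ^2*S := by
      rw [hVval, hAip, hA2]; field_simp; ring
    rw [hfinal]
    have hpos : 0 ≤ γ^2*(1/(n:ℝ))*‖G‖^2 := by positivity
    linarith
  have hGsum : ∑ j, ∑ i, ‖gk1 j i - gstar i‖^2 = ((n:ℝ)-1)*S + D := by
    have hinner : ∀ j : Fin n, ∑ i, ‖gk1 j i - gstar i‖^2
        = S - ‖gk j - gstar j‖^2 + ‖gk1 j j - gstar j‖^2 := by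
      intro j
      have ha : ‖gk1 j j - gstar j‖^2 + ∑ i ∈ univ.erase j, ‖gk1 j i - gstar i‖^2
          = ∑ i, ‖gk1 j i - gstar i‖^2 :=
        Finset.add_sum_erase univ (fun i => ‖gk1 j i - gstar i‖^2) (Finset.mem_univ j)
      have hb : ‖gk j - gstar j‖^2 + ∑ i ∈ univ.erase j, ‖gk i - gstar i‖^2
          = ∑ i, ‖gk i - gstar i‖^2 :=
        Finset.add_sum_erase univ (fun i => ‖gk i - gstar i‖^2) (Finset.mem_univ j)
      have hc2 : ∑ i ∈ univ.erase j, ‖gk1 j i - gstar i‖^2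
          = ∑ i ∈ univ.erase j, ‖gk i - gstar i‖^2 :=
        Finset.sum_congr rfl fun i hi => by rw [hgk1' j i (Finset.mem_erase.mp hi).1]
      rw [hS]
      linarith [ha, hb, hc2]
    rw [Finset.sum_congr rfl (fun j _ => hinner j)]
    rw [Finset.sum_add_distrib, Finset.sum_sub_distrib, Finset.sum_const, ← hD]
    have hsd : ∑ j, ‖gk j - gstar j‖^2 = S := by rw [hS]
    rw [hsd]
    simp [Finset.card_univ, nsmul_eq_mul]
    ring
  have hLHSsum : ∑ j, ((c/(n:ℝ)) * ∑ i, ‖gk1 j i - gstar i‖^2 + ‖xk1 j - xstar‖^2)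
      = (c/(n:ℝ))*(((n:ℝ)-1)*S + D) + X := by
    rw [Finset.sum_add_distrib, ← Finset.mul_sum, hGsum, ← hX]
  rw [hLHSsum, hκ']
  have hmain : (1+μ*γ) * ((c/(n:ℝ))*(((n:ℝ)-1)*S + D) + X) ≤ c*S + (n:ℝ)*U := by
    calc (1+μ*γ) * ((c/(n:ℝ))*(((n:ℝ)-1)*S + D) + X)
        = ((1+μ*γ)*(c/(n:ℝ)))*(((n:ℝ)-1)*S) + ((1+μ*γ)*(c/(n:ℝ)))*D + (1+μ*γ)*X := by
          ring
      _ = (γ^2+γ/L)*(((n:ℝ)-1)*S) + (γ^2+γ/L)*D + (1+μ*γ)*X := by rw [e1]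
      _ ≤ (γ^2+γ/L)*(((n:ℝ)-1)*S) + (γ^2+γ/L)*D + (V - (γ^2+γ/L)*D) := by linarith
      _ = (γ^2+γ/L)*(((n:ℝ)-1)*S) + V := by ring
      _ ≤ (γ^2+γ/L)*(((n:ℝ)-1)*S) + ((n:ℝ)*U + γ^2*S) := by linarith
      _ = ((γ^2+γ/L)*((n:ℝ)-1) + γ^2)*S + (n:ℝ)*U := by ring
      _ = c*S + (n:ℝ)*U := by rw [e2']
  rw [one_div_mul_eq_div, one_div_mul_eq_div, div_le_div_iff₀ hN hβ]
  have hBn : ((c/(n:ℝ))*S + U)*(n:ℝ) = c*S + (n:ℝ)*U := by field_simp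
  nlinarith [hmain, hBn]
end

section
/- Under the assumptions of the Point-SAGA single-step Lyapunov descent theorem (each f_i L-smooth and μ-strongly convex, 0 < μ < L, step size γ and κ = μγ/(1+μγ) as there, initialization g_i^0 = ∇f_i(x^0)), the iterates satisfy E‖x^k - x*‖² ≤ (1-κ)^k · ((μ+L)/μ) · ‖x^0 - x*‖². -/
open RealInnerProductSpace Finset

open scoped Gradient

set_option maxHeartbeats 1000000
set_option linter.unusedVariables false

section PointSagaAux

variable {d : ℕ}

lemma psaga_hasDerivAt_line {f : EuclideanSpace ℝ (Fin d) → ℝ} {g : EuclideanSpace ℝ (Fin d)}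
    (x v : EuclideanSpace ℝ (Fin d)) {t : ℝ}
    (hg : HasGradientAt f g (x + t • v)) :
    HasDerivAt (fun s : ℝ => f (x + s • v)) ⟪g, v⟫ t := by
  have h1 : HasDerivAt (fun s : ℝ => x + s • v) v t := by
    simpa using ((hasDerivAt_id t).smul_const v).const_add x
  have h2 := (hg.hasFDerivAt.comp_hasDerivAt t h1)
  exact h2

lemma psaga_first_order {f : EuclideanSpace ℝ (Fin d) → ℝ} (hf : ConvexOn ℝ Set.univ f)
    (hd : Differentiable ℝ f) (x y : EuclideanSpace ℝ (Fin d)) :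
    f x + ⟪∇ f x, y - x⟫ ≤ f y := by
  set v := y - x with hv
  have hφ : ConvexOn ℝ Set.univ (fun t : ℝ => f (x + t • v)) := by
    have h := hf.comp_affineMap (AffineMap.lineMap x y)
    have : (fun t : ℝ => f (x + t • v)) = (f ∘ (AffineMap.lineMap x y)) := by
      funext t
      simp [AffineMap.lineMap_apply, hv, add_comm]
    rw [this]
    simpa using h
  have hder : HasDerivAt (fun t : ℝ => f (x + t • v)) ⟪∇ f x, v⟫ 0 := by
    have := psaga_hasDerivAt_line (f := f) (g := ∇ f x) x v (t := 0)
      (by simpa using (hd x).hasGradientAt)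
    simpa using this
  have hs := hφ.le_slope_of_hasDerivAt (Set.mem_univ 0) (Set.mem_univ 1)
    (by norm_num) hder
  rw [slope_def_field] at hs
  simp only [one_smul, zero_smul, add_zero] at hs
  have : f (x + v) = f y := by rw [hv]; congr 1; abel
  rw [this] at hs
  have hs' : ⟪∇ f x, v⟫ ≤ f y - f x := by
    have := hs
    field_simp at this
    linarith [this]
  linarith


lemma psaga_descent {f : EuclideanSpace ℝ (Fin d) → ℝ} {C : ℝ} (hC : 0 ≤ C)
    (hd : Differentiable ℝ f)
    (hlip : ∀ a b : EuclideanSpace ℝ (Fin d), ‖∇ f a - ∇ f b‖ ≤ C * ‖a - b‖)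
    (x y : EuclideanSpace ℝ (Fin d)) :
    f y ≤ f x + ⟪∇ f x, y - x⟫ + C / 2 * ‖y - x‖ ^ 2 := by
  set v := y - x with hv
  set u : ℝ → ℝ := fun t => f (x + t • v) - t * ⟪∇ f x, v⟫ - C * t ^ 2 / 2 * ‖v‖ ^ 2 with hu
  have hder : ∀ t : ℝ, HasDerivAt u
      (⟪∇ f (x + t • v), v⟫ - ⟪∇ f x, v⟫ - C * t * ‖v‖ ^ 2) t := by
    intro t
    have h1 : HasDerivAt (fun s : ℝ => f (x + s • v)) ⟪∇ f (x + t • v), v⟫ t :=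
      psaga_hasDerivAt_line x v (hd _).hasGradientAt
    have h2 : HasDerivAt (fun s : ℝ => s * ⟪∇ f x, v⟫) ⟪∇ f x, v⟫ t := by
      simpa using (hasDerivAt_id t).mul_const ⟪∇ f x, v⟫
    have h3 : HasDerivAt (fun s : ℝ => C * s ^ 2 / 2 * ‖v‖ ^ 2) (C * t * ‖v‖ ^ 2) t := by
      have h0 : HasDerivAt (fun s : ℝ => s ^ 2) (2 * t) t := by
        simpa using hasDerivAt_pow 2 t
      have h4 := ((h0.const_mul C).div_const 2).mul_const (‖v‖ ^ 2)
      exact h4.congr_deriv (by ring)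
    exact (h1.sub h2).sub h3
  have hdiffu : Differentiable ℝ u := fun t => (hder t).differentiableAt
  have hmono : AntitoneOn u (Set.Icc 0 1) := by
    apply antitoneOn_of_deriv_nonpos (convex_Icc 0 1)
      hdiffu.continuous.continuousOn
      (fun t _ => (hdiffu t).differentiableWithinAt)
    intro t ht
    rw [interior_Icc] at ht
    rw [(hder t).deriv]
    have hb : ⟪∇ f (x + t • v) - ∇ f x, v⟫ ≤ C * t * ‖v‖ ^ 2 := by
      calc ⟪∇ f (x + t • v) - ∇ f x, v⟫ ≤ ‖∇ f (x + t • v) - ∇ f x‖ * ‖v‖ :=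
            real_inner_le_norm _ _
        _ ≤ (C * ‖(x + t • v) - x‖) * ‖v‖ := by
            apply mul_le_mul_of_nonneg_right (hlip _ _) (norm_nonneg _)
        _ = C * t * ‖v‖ ^ 2 := by
            rw [add_sub_cancel_left, norm_smul]
            simp only [Real.norm_eq_abs, abs_of_nonneg ht.1.le]
            ring
    rw [inner_sub_left] at hb
    linarith
  have h01 := hmono (Set.mem_Icc.2 ⟨le_refl 0, by norm_num⟩)
    (Set.mem_Icc.2 ⟨by norm_num, le_refl 1⟩) (by norm_num)
  simp only [hu, one_smul, zero_smul, add_zero, one_pow, one_mul, zero_pow, zero_mul,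
    mul_zero, sub_zero, ne_eq, OfNat.ofNat_ne_zero, not_false_eq_true] at h01
  have hfy : f (x + v) = f y := by rw [hv]; congr 1; abel
  rw [hfy] at h01
  have : C * 1 ^ 2 / 2 * ‖v‖ ^ 2 = C / 2 * ‖v‖ ^ 2 := by ring
  linarith [h01, this.le, this.ge]

lemma psaga_lower {ψ : EuclideanSpace ℝ (Fin d) → ℝ} {M : ℝ} (hM : 0 < M)
    (hd : Differentiable ℝ ψ)
    (hfo : ∀ a b : EuclideanSpace ℝ (Fin d), ψ a + ⟪∇ ψ a, b - a⟫ ≤ ψ b)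
    (hdesc : ∀ a b : EuclideanSpace ℝ (Fin d),
      ψ b ≤ ψ a + ⟪∇ ψ a, b - a⟫ + M / 2 * ‖b - a‖ ^ 2)
    (x y : EuclideanSpace ℝ (Fin d)) :
    ψ x + ⟪∇ ψ x, y - x⟫ + 1 / (2 * M) * ‖∇ ψ y - ∇ ψ x‖ ^ 2 ≤ ψ y := by
  set Δ := ∇ ψ y - ∇ ψ x with hΔ
  set z := y - (1 / M) • Δ with hz
  have h1 : ψ x + ⟪∇ ψ x, z - x⟫ ≤ ψ z := hfo x z
  have h2 : ψ z ≤ ψ y + ⟪∇ ψ y, z - y⟫ + M / 2 * ‖z - y‖ ^ 2 := hdesc y z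
  have e1 : z - y = -((1 / M) • Δ) := by rw [hz]; abel
  have e2 : z - x = (y - x) - (1 / M) • Δ := by rw [hz]; abel
  have e3 : ⟪∇ ψ y, z - y⟫ = -(1 / M) * ⟪∇ ψ y, Δ⟫ := by
    rw [e1, inner_neg_right, real_inner_smul_right]; ring
  have e4 : ‖z - y‖ ^ 2 = (1 / M) ^ 2 * ‖Δ‖ ^ 2 := by
    rw [e1, norm_neg, norm_smul, mul_pow, Real.norm_eq_abs, sq_abs]
  have e5 : ⟪∇ ψ x, z - x⟫ = ⟪∇ ψ x, y - x⟫ - (1 / M) * ⟪∇ ψ x, Δ⟫ := by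
    rw [e2, inner_sub_right, real_inner_smul_right]
  have e6 : ⟪∇ ψ y, Δ⟫ - ⟪∇ ψ x, Δ⟫ = ‖Δ‖ ^ 2 := by
    rw [← inner_sub_left, ← hΔ, real_inner_self_eq_norm_sq]
  rw [e3, e4] at h2
  rw [e5] at h1
  have key : M / 2 * ((1 / M) ^ 2 * ‖Δ‖ ^ 2) = 1 / (2 * M) * ‖Δ‖ ^ 2 := by
    field_simp
  rw [key] at h2
  have e7 : (1 / M) * ⟪∇ ψ y, Δ⟫ = (1 / M) * ⟪∇ ψ x, Δ⟫ + (1 / M) * ‖Δ‖ ^ 2 := by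
    have := congrArg (fun r => (1 / M) * r) e6
    simp only [mul_sub] at this
    linarith
  have e8 : 1 / M * ‖Δ‖ ^ 2 - 1 / (2 * M) * ‖Δ‖ ^ 2 = 1 / (2 * M) * ‖Δ‖ ^ 2 := by
    field_simp; ring
  linarith [h1, h2, e7, e8]


lemma psaga_grad_normsq (c : ℝ) (x : EuclideanSpace ℝ (Fin d)) :
    HasGradientAt (fun y : EuclideanSpace ℝ (Fin d) => c * ‖y‖ ^ 2) ((2 * c) • x) x := by
  have h := (hasStrictFDerivAt_norm_sq x).hasFDerivAt.const_mul c
  rw [hasGradientAt_iff_hasFDerivAt]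
  refine h.congr_fderiv ?_
  ext w
  simp [InnerProductSpace.toDual_apply_apply, real_inner_smul_left]
  ring

lemma psaga_grad_sub_normsq {f : EuclideanSpace ℝ (Fin d) → ℝ} (hd : Differentiable ℝ f)
    (c : ℝ) (x : EuclideanSpace ℝ (Fin d)) :
    HasGradientAt (fun y => f y - c * ‖y‖ ^ 2) (∇ f x - (2 * c) • x) x := by
  have h1 := (hd x).hasGradientAt.hasFDerivAt
  have h2 := (psaga_grad_normsq c x).hasFDerivAt
  rw [hasGradientAt_iff_hasFDerivAt]
  refine (h1.sub h2).congr_fderiv ?_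
  ext w
  simp [InnerProductSpace.toDual_apply_apply, inner_sub_left]

lemma psaga_coercivity {f : EuclideanSpace ℝ (Fin d) → ℝ} {μ L : ℝ} (hμ : 0 < μ) (hμL : μ < L)
    (hconv : StrongConvexOn Set.univ μ f) (hd : Differentiable ℝ f)
    (hlip : ∀ a b : EuclideanSpace ℝ (Fin d), ‖∇ f a - ∇ f b‖ ≤ L * ‖a - b‖)
    (x y : EuclideanSpace ℝ (Fin d)) :
    ‖∇ f x - ∇ f y‖ ^ 2 + μ * L * ‖x - y‖ ^ 2 ≤ (μ + L) * ⟪∇ f x - ∇ f y, x - y⟫ := by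
  set ψ : EuclideanSpace ℝ (Fin d) → ℝ := fun z => f z - μ / 2 * ‖z‖ ^ 2 with hψdef
  have hψconv : ConvexOn ℝ Set.univ ψ := (strongConvexOn_iff_convex).mp hconv
  have hg : ∀ w : EuclideanSpace ℝ (Fin d), HasGradientAt ψ (∇ f w - μ • w) w := by
    intro w
    have h := psaga_grad_sub_normsq hd (μ / 2) w
    have : (2 * (μ / 2)) • w = μ • w := by rw [mul_div_cancel₀]; norm_num
    rwa [this] at h
  have hψgrad : ∀ w, ∇ ψ w = ∇ f w - μ • w := fun w => (hg w).gradient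
  have hψd : Differentiable ℝ ψ := fun w => (hg w).differentiableAt
  have hM : (0:ℝ) < L - μ := by linarith
  have hfo : ∀ a b : EuclideanSpace ℝ (Fin d), ψ a + ⟪∇ ψ a, b - a⟫ ≤ ψ b :=
    psaga_first_order hψconv hψd
  have hdesc : ∀ a b : EuclideanSpace ℝ (Fin d),
      ψ b ≤ ψ a + ⟪∇ ψ a, b - a⟫ + (L - μ) / 2 * ‖b - a‖ ^ 2 := by
    intro a b
    have hd1 := psaga_descent (C := L) (by linarith) hd
      (fun a b => by
        have := hlip a b
        exact this) a b
    have hid : ‖b‖ ^ 2 = ‖a‖ ^ 2 + 2 * ⟪a, b - a⟫ + ‖b - a‖ ^ 2 := by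
      have h := norm_add_sq_real a (b - a)
      rw [add_sub_cancel] at h
      linarith
    have hinner : ⟪∇ ψ a, b - a⟫ = ⟪∇ f a, b - a⟫ - μ * ⟪a, b - a⟫ := by
      rw [hψgrad a, inner_sub_left, real_inner_smul_left]
    have hid2 : μ / 2 * ‖b‖ ^ 2 = μ / 2 * ‖a‖ ^ 2 + μ * ⟪a, b - a⟫ + μ / 2 * ‖b - a‖ ^ 2 := by
      rw [hid]; ring
    have hψb : ψ b = f b - μ / 2 * ‖b‖ ^ 2 := rfl
    have hψa : ψ a = f a - μ / 2 * ‖a‖ ^ 2 := rfl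
    rw [hψb, hψa]
    nlinarith [hd1, hid2, hinner]
  have h1 := psaga_lower hM hψd hfo hdesc x y
  have h2 := psaga_lower hM hψd hfo hdesc y x
  have hrev : ‖∇ ψ x - ∇ ψ y‖ = ‖∇ ψ y - ∇ ψ x‖ := norm_sub_rev _ _
  have hip : ⟪∇ ψ x, y - x⟫ + ⟪∇ ψ y, x - y⟫ = -⟪∇ ψ x - ∇ ψ y, x - y⟫ := by
    have : (y - x) = -(x - y) := by abel
    rw [this, inner_neg_right, inner_sub_left]
    ring
  have hsum : (1 / (L - μ)) * ‖∇ ψ x - ∇ ψ y‖ ^ 2 ≤ ⟪∇ ψ x - ∇ ψ y, x - y⟫ := by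
    have e : 1 / (2 * (L - μ)) * ‖∇ ψ y - ∇ ψ x‖ ^ 2
        + 1 / (2 * (L - μ)) * ‖∇ ψ x - ∇ ψ y‖ ^ 2
        = (1 / (L - μ)) * ‖∇ ψ x - ∇ ψ y‖ ^ 2 := by
      rw [hrev]; field_simp; ring
    linarith [h1, h2, hip, e.le, e.ge]
  have h3 : ‖∇ ψ x - ∇ ψ y‖ ^ 2 ≤ (L - μ) * ⟪∇ ψ x - ∇ ψ y, x - y⟫ := by
    have := mul_le_mul_of_nonneg_left hsum hM.le
    rw [← mul_assoc] at this
    rw [mul_one_div, div_self (by linarith : L - μ ≠ 0), one_mul] at this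
    linarith
  have g1 : ∇ ψ x - ∇ ψ y = (∇ f x - ∇ f y) - μ • (x - y) := by
    rw [hψgrad x, hψgrad y, smul_sub]; abel
  have hn : ‖∇ ψ x - ∇ ψ y‖ ^ 2 = ‖∇ f x - ∇ f y‖ ^ 2
      - 2 * (μ * ⟪∇ f x - ∇ f y, x - y⟫) + μ ^ 2 * ‖x - y‖ ^ 2 := by
    rw [g1, norm_sub_sq_real, real_inner_smul_right, norm_smul, mul_pow,
      Real.norm_eq_abs, sq_abs]
  have hi : ⟪∇ ψ x - ∇ ψ y, x - y⟫ = ⟪∇ f x - ∇ f y, x - y⟫ - μ * ‖x - y‖ ^ 2 := by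
    rw [g1, inner_sub_left, real_inner_smul_left, real_inner_self_eq_norm_sq]
  rw [hn, hi] at h3
  nlinarith [h3]

lemma psaga_prox_grad {f : EuclideanSpace ℝ (Fin d) → ℝ} {γ : ℝ} (hγ : γ ≠ 0)
    (hd : Differentiable ℝ f) {z p : EuclideanSpace ℝ (Fin d)}
    (hp : ∀ y, γ * f p + ‖z - p‖ ^ 2 / 2 ≤ γ * f y + ‖z - y‖ ^ 2 / 2) :
    ∇ f p = (1 / γ) • (z - p) := by
  set F : EuclideanSpace ℝ (Fin d) → ℝ := fun y => γ * f y + ‖z - y‖ ^ 2 / 2 with hF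
  have hmin : IsLocalMin F p := Filter.Eventually.of_forall (fun y => hp y)
  have hF2 : HasFDerivAt (fun y : EuclideanSpace ℝ (Fin d) => ‖z - y‖ ^ 2 / 2)
      ((2:ℝ)⁻¹ • ((2:ℕ) • (innerSL ℝ (z - p)).comp
        (-(ContinuousLinearMap.id ℝ (EuclideanSpace ℝ (Fin d)))))) p := by
    have hsub : HasFDerivAt (fun y : EuclideanSpace ℝ (Fin d) => z - y)
        (-(ContinuousLinearMap.id ℝ (EuclideanSpace ℝ (Fin d)))) p :=
      (hasFDerivAt_id p).const_sub z
    have h2 := hsub.norm_sq.const_mul ((2:ℝ)⁻¹)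
    have heq : (fun y : EuclideanSpace ℝ (Fin d) => ‖z - y‖ ^ 2 / 2)
        = (fun y : EuclideanSpace ℝ (Fin d) => (2:ℝ)⁻¹ * ‖z - y‖ ^ 2) := by
      funext y; rw [div_eq_inv_mul]
    rw [heq]
    exact h2
  have hF1 := ((hd p).hasGradientAt.hasFDerivAt.const_mul γ)
  have hFd := hF1.add hF2
  have hzero := hmin.hasFDerivAt_eq_zero hFd
  have happ : ∀ w, γ * ⟪∇ f p, w⟫ - ⟪z - p, w⟫ = 0 := by
    intro w
    have h6 := congrArg (fun (T : EuclideanSpace ℝ (Fin d) →L[ℝ] ℝ) => T w) hzero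
    simp only [ContinuousLinearMap.add_apply, ContinuousLinearMap.smul_apply,
      ContinuousLinearMap.coe_comp', Function.comp_apply, ContinuousLinearMap.neg_apply,
      ContinuousLinearMap.coe_id', id_eq, innerSL_apply_apply, InnerProductSpace.toDual_apply_apply,
      inner_neg_right, smul_eq_mul, nsmul_eq_mul, Nat.cast_ofNat,
      ContinuousLinearMap.zero_apply] at h6
    linarith
  have hkey : γ • ∇ f p - (z - p) = 0 := by
    have := happ (γ • ∇ f p - (z - p))
    rw [← real_inner_smul_left, ← inner_sub_left] at this
    exact inner_self_eq_zero.mp this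
  have : γ • ∇ f p = z - p := by rwa [sub_eq_zero] at hkey
  rw [← this, smul_smul]
  field_simp
  rw [one_smul]


lemma psaga_step_core {f : EuclideanSpace ℝ (Fin d) → ℝ} {μ L γ c : ℝ}
    (hμ : 0 < μ) (hμL : μ < L) (hγ : 0 < γ) (hc : 0 ≤ c)
    (hcoef : (1 + μ * γ) * c * (μ + L) ≤ γ ^ 2 * (μ + L) + 2 * γ)
    (hconv : StrongConvexOn Set.univ μ f) (hd : Differentiable ℝ f)
    (hlip : ∀ a b : EuclideanSpace ℝ (Fin d), ‖∇ f a - ∇ f b‖ ≤ L * ‖a - b‖)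
    (z p xs : EuclideanSpace ℝ (Fin d))
    (hp : ∀ y, γ * f p + ‖z - p‖ ^ 2 / 2 ≤ γ * f y + ‖z - y‖ ^ 2 / 2) :
    (1 + μ * γ) * (c * ‖(1 / γ) • (z - p) - ∇ f xs‖ ^ 2 + ‖p - xs‖ ^ 2)
      ≤ ‖z - xs - γ • ∇ f xs‖ ^ 2 := by
  have hgrad : ∇ f p = (1 / γ) • (z - p) := psaga_prox_grad (ne_of_gt hγ) hd hp
  rw [← hgrad]
  have hz : z - xs - γ • ∇ f xs = (p - xs) + γ • (∇ f p - ∇ f xs) := by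
    have hs : γ • ∇ f p = z - p := by
      rw [hgrad, smul_smul]
      rw [mul_one_div, div_self (ne_of_gt hγ), one_smul]
    rw [smul_sub, hs]; abel
  rw [hz]
  have hexp : ‖(p - xs) + γ • (∇ f p - ∇ f xs)‖ ^ 2
      = ‖p - xs‖ ^ 2 + 2 * (γ * ⟪∇ f p - ∇ f xs, p - xs⟫) + γ ^ 2 * ‖∇ f p - ∇ f xs‖ ^ 2 := by
    rw [norm_add_sq_real, real_inner_smul_right, norm_smul, mul_pow, Real.norm_eq_abs, sq_abs,
      real_inner_comm]
  rw [hexp]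
  have hco := psaga_coercivity hμ hμL hconv hd hlip p xs
  have hml : (0:ℝ) < μ + L := by linarith
  rw [← mul_le_mul_iff_right₀ hml]
  have h1 := mul_le_mul_of_nonneg_left hco (by positivity : (0:ℝ) ≤ 2 * γ)
  have h2 := mul_le_mul_of_nonneg_right hcoef (sq_nonneg ‖∇ f p - ∇ f xs‖)
  have h3 : 0 ≤ γ * μ * (L - μ) * ‖p - xs‖ ^ 2 := by
    have : (0:ℝ) < L - μ := by linarith
    positivity
  nlinarith [h1, h2, h3]


end PointSagaAux

theorem point_saga_smooth_rate {d n : ℕ} (hn : 0 < n) (μ L : ℝ)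
    (hμ : 0 < μ) (hμL : μ < L)
    (f : Fin n → EuclideanSpace ℝ (Fin d) → ℝ)
    (hconv : ∀ i, StrongConvexOn Set.univ μ (f i))
    (hdiff : ∀ i, Differentiable ℝ (f i))
    (hlip : ∀ i, LipschitzWith (Real.toNNReal L) (fun z => gradient (f i) z))
    (xstar : EuclideanSpace ℝ (Fin d))
    (hmin : ∀ y, (1 / (n : ℝ)) * ∑ i, f i xstar ≤ (1 / (n : ℝ)) * ∑ i, f i y)
    (γ κ : ℝ)
    (hγ : γ = Real.sqrt (((n : ℝ) - 1) ^ 2 + 4 * n * L / μ) / (2 * L * n)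
        - (1 - 1 / (n : ℝ)) / (2 * L))
    (hκ : κ = μ * γ / (1 + μ * γ))
    (x0 : EuclideanSpace ℝ (Fin d))
    -- the iterates and gradient tables, indexed by the history of sampled indices
    (X : List (Fin n) → EuclideanSpace ℝ (Fin d))
    (G : List (Fin n) → Fin n → EuclideanSpace ℝ (Fin d))
    (hX0 : X [] = x0)
    (hG0 : ∀ i, G [] i = gradient (f i) x0)
    (hstep : ∀ (p : List (Fin n)) (j : Fin n),
      IsProx γ (f j) (X p + γ • (G p j - (1 / (n : ℝ)) • ∑ i, G p i)) (X (p ++ [j])))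
    (hupd : ∀ (p : List (Fin n)) (j : Fin n),
      G (p ++ [j]) j = (1 / γ) •
        ((X p + γ • (G p j - (1 / (n : ℝ)) • ∑ i, G p i)) - X (p ++ [j])))
    (hupd' : ∀ (p : List (Fin n)) (j i : Fin n), i ≠ j → G (p ++ [j]) i = G p i)
    (k : ℕ) :
    (1 / (n : ℝ) ^ k) * ∑ ω : Fin k → Fin n, ‖X (List.ofFn ω) - xstar‖ ^ 2 ≤
      (1 - κ) ^ k * ((μ + L) / μ) * ‖x0 - xstar‖ ^ 2 := by
  have hn' : (0:ℝ) < n := by exact_mod_cast hn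
  have hn1 : (1:ℝ) ≤ n := by exact_mod_cast hn
  have hL : (0:ℝ) < L := lt_trans hμ hμL
  -- γ facts
  set s : ℝ := Real.sqrt (((n : ℝ) - 1) ^ 2 + 4 * n * L / μ) with hsdef
  have hs0 : 0 ≤ s := Real.sqrt_nonneg _
  have hs2 : s ^ 2 = ((n : ℝ) - 1) ^ 2 + 4 * n * L / μ := by
    rw [hsdef]
    rw [Real.sq_sqrt]
    positivity
  have hγeq : γ = (s - ((n:ℝ) - 1)) / (2 * L * n) := by
    rw [hγ]
    field_simp
  have hslt : (n:ℝ) - 1 < s := by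
    nlinarith [hs2, hs0, hn1, hL, hμ, div_pos (by positivity : (0:ℝ) < 4 * n * L) hμ]
  have hγpos : 0 < γ := by
    rw [hγeq]; apply div_pos (by linarith) (by positivity)
  have hquad : μ * L * n * γ ^ 2 + ((n:ℝ) - 1) * μ * γ = 1 := by
    have hμs : μ * s ^ 2 = μ * ((n:ℝ) - 1) ^ 2 + 4 * n * L := by
      rw [hs2]; field_simp
    rw [hγeq]
    field_simp
    nlinarith [hμs]
  have h1γ : (0:ℝ) < 1 + μ * γ := by positivity
  have hκ1 : 1 - κ = 1 / (1 + μ * γ) := by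
    rw [hκ]; field_simp; ring
  have hκpos : 0 < 1 - κ := by rw [hκ1]; positivity
  set c : ℝ := 1 / (μ * L * n) with hcdef
  have hc : 0 < c := by positivity
  -- pointwise Lipschitz bounds
  have hlip' : ∀ i (a b : EuclideanSpace ℝ (Fin d)),
      ‖∇ (f i) a - ∇ (f i) b‖ ≤ L * ‖a - b‖ := by
    intro i a b
    have h := (hlip i).dist_le_mul a b
    rw [dist_eq_norm, dist_eq_norm] at h
    rwa [Real.coe_toNNReal _ hL.le] at h
  -- sum of gradients at xstar vanishes
  have hgs : ∑ i, ∇ (f i) xstar = 0 := by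
    have hmin' : IsLocalMin (fun y => ∑ i, f i y) xstar := by
      apply Filter.Eventually.of_forall
      intro y
      have := hmin y
      have hpos : (0:ℝ) < 1 / n := by positivity
      exact (mul_le_mul_iff_right₀ hpos).mp this
    have hFd : HasFDerivAt (fun y => ∑ i, f i y)
        (∑ i, (InnerProductSpace.toDual ℝ (EuclideanSpace ℝ (Fin d))) (∇ (f i) xstar)) xstar := by
      apply HasFDerivAt.fun_sum
      intro i _
      exact ((hdiff i) xstar).hasGradientAt.hasFDerivAt
    have hzero := hmin'.hasFDerivAt_eq_zero hFd
    have hmap : (InnerProductSpace.toDual ℝ (EuclideanSpace ℝ (Fin d))) (∑ i, ∇ (f i) xstar)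
        = (InnerProductSpace.toDual ℝ (EuclideanSpace ℝ (Fin d))) 0 := by
      rw [map_sum, map_zero]; exact hzero
    exact (InnerProductSpace.toDual ℝ (EuclideanSpace ℝ (Fin d))).injective hmap
  -- Lyapunov function
  set T : List (Fin n) → ℝ :=
    fun p => c * ∑ i, ‖G p i - ∇ (f i) xstar‖ ^ 2 + ‖X p - xstar‖ ^ 2 with hTdef
  have hTge : ∀ p, ‖X p - xstar‖ ^ 2 ≤ T p := by
    intro p
    have : 0 ≤ c * ∑ i, ‖G p i - ∇ (f i) xstar‖ ^ 2 := by positivity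
    simp only [hTdef]; linarith
  have hTnonneg : ∀ p, 0 ≤ T p := fun p => le_trans (sq_nonneg _) (hTge p)
  -- one-step descent
  have hstepT : ∀ p : List (Fin n), ∑ j, T (p ++ [j]) ≤ ((n:ℝ) * (1 - κ)) * T p := by
    intro p
    set g : Fin n → EuclideanSpace ℝ (Fin d) := fun i => G p i - ∇ (f i) xstar with hgdef
    set S : ℝ := ∑ i, ‖g i‖ ^ 2 with hSdef
    set w : EuclideanSpace ℝ (Fin d) := (1 / (n:ℝ)) • ∑ i, g i with hwdef
    have hv : (1 / (n : ℝ)) • ∑ i, G p i = w := by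
      rw [hwdef, hgdef]
      rw [Finset.sum_sub_distrib, hgs, sub_zero]
    set z : Fin n → EuclideanSpace ℝ (Fin d) :=
      fun j => X p + γ • (G p j - (1 / (n : ℝ)) • ∑ i, G p i) with hzdef
    -- per-sample inequality
    have hper : ∀ j, (1 + μ * γ) * (c * ‖G (p ++ [j]) j - ∇ (f j) xstar‖ ^ 2
        + ‖X (p ++ [j]) - xstar‖ ^ 2) ≤ ‖z j - xstar - γ • ∇ (f j) xstar‖ ^ 2 := by
      intro j
      have hcoef : (1 + μ * γ) * c * (μ + L) ≤ γ ^ 2 * (μ + L) + 2 * γ := by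
        have hcval : c * (μ * L * n) = 1 := by
          rw [hcdef]; field_simp
        -- (1+μγ)c(μ+L) ≤ γ²(μ+L) + 2γ  ⇔ uses quad identity and μ ≤ L
        -- from hquad : μLnγ² + (n-1)μγ = 1 = c⁻¹ ... derive
        have hkey : γ ^ 2 = c * (1 - ((n:ℝ) - 1) * μ * γ) := by
          have h1 : μ * L * n * γ ^ 2 = 1 - ((n:ℝ)-1) * μ * γ := by linarith [hquad]
          have h2 := congrArg (fun r => c * r) h1
          rw [← mul_assoc] at h2
          rw [hcdef] at h2 ⊢
          field_simp at h2 ⊢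
          linarith [h2]
        have h7 : c * (μ * L * n) * (γ * (μ + L)) = γ * (μ + L) := by
          linear_combination (γ * (μ + L)) * hcval
        have hkeyL := congrArg (fun r => r * (L * (μ + L))) hkey
        have h8 : 0 ≤ γ * (L - μ) := by nlinarith [hγpos, hμL]
        have hgoalL : ((1 + μ * γ) * c * (μ + L)) * L ≤ (γ ^ 2 * (μ + L) + 2 * γ) * L := by
          nlinarith [hkeyL, h7, h8]
        exact le_of_mul_le_mul_right hgoalL hL
      have hcore := psaga_step_core hμ hμL hγpos hc.le hcoef (hconv j) (hdiff j)
        (hlip' j) (z j) (X (p ++ [j])) xstar (hstep p j)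
      rwa [← hupd p j] at hcore
    -- rewriting T (p ++ [j])
    have hTsplit : ∀ j, T (p ++ [j]) = c * S - c * ‖g j‖ ^ 2
        + (c * ‖G (p ++ [j]) j - ∇ (f j) xstar‖ ^ 2 + ‖X (p ++ [j]) - xstar‖ ^ 2) := by
      intro j
      have hsum : ∑ i, ‖G (p ++ [j]) i - ∇ (f i) xstar‖ ^ 2
          = ‖G (p ++ [j]) j - ∇ (f j) xstar‖ ^ 2
            + ∑ i ∈ Finset.univ.erase j, ‖G p i - ∇ (f i) xstar‖ ^ 2 := by
        rw [← Finset.add_sum_erase _ _ (Finset.mem_univ j)]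
        congr 1
        apply Finset.sum_congr rfl
        intro i hi
        rw [hupd' p j i (Finset.ne_of_mem_erase hi)]
      have herase : ∑ i ∈ Finset.univ.erase j, ‖G p i - ∇ (f i) xstar‖ ^ 2
          = S - ‖g j‖ ^ 2 := by
        rw [hSdef, Finset.sum_erase_eq_sub (Finset.mem_univ j)]
      simp only [hTdef, hsum, herase]
      ring
    -- variance bound
    have hzj : ∀ j, z j - xstar - γ • ∇ (f j) xstar = (X p - xstar) + γ • (g j - w) := by
      intro j
      simp only [hzdef, hv, hgdef]
      rw [smul_sub, smul_sub, smul_sub]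
      abel
    have hsumg : ∑ i, g i = (n:ℝ) • w := by
      rw [hwdef, smul_smul]
      rw [mul_one_div, div_self (ne_of_gt hn'), one_smul]
    have hvar : ∑ j, ‖z j - xstar - γ • ∇ (f j) xstar‖ ^ 2
        ≤ (n:ℝ) * ‖X p - xstar‖ ^ 2 + γ ^ 2 * S := by
      have hexp : ∀ j, ‖z j - xstar - γ • ∇ (f j) xstar‖ ^ 2
          = ‖X p - xstar‖ ^ 2 + 2 * ⟪X p - xstar, γ • (g j - w)⟫ + γ ^ 2 * ‖g j - w‖ ^ 2 := by
        intro j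
        rw [hzj j, norm_add_sq_real, norm_smul, mul_pow, Real.norm_eq_abs, sq_abs]
      rw [Finset.sum_congr rfl (fun j _ => hexp j)]
      rw [Finset.sum_add_distrib, Finset.sum_add_distrib]
      have e1 : ∑ _j : Fin n, ‖X p - xstar‖ ^ 2 = (n:ℝ) * ‖X p - xstar‖ ^ 2 := by
        rw [Finset.sum_const, Finset.card_univ, Fintype.card_fin, nsmul_eq_mul]
      have e2 : ∑ j, 2 * ⟪X p - xstar, γ • (g j - w)⟫ = 0 := by
        rw [← Finset.mul_sum, ← inner_sum]
        have : ∑ j, γ • (g j - w) = (0 : EuclideanSpace ℝ (Fin d)) := by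
          rw [← Finset.smul_sum, Finset.sum_sub_distrib, hsumg]
          rw [Finset.sum_const, Finset.card_univ, Fintype.card_fin,
            ← Nat.cast_smul_eq_nsmul ℝ]
          simp
        rw [this, inner_zero_right, mul_zero]
      have e3 : ∑ j, γ ^ 2 * ‖g j - w‖ ^ 2 ≤ γ ^ 2 * S := by
        rw [← Finset.mul_sum]
        apply mul_le_mul_of_nonneg_left _ (sq_nonneg γ)
        have hexpand : ∑ j, ‖g j - w‖ ^ 2 = S - (n:ℝ) * ‖w‖ ^ 2 := by
          have : ∀ j, ‖g j - w‖ ^ 2 = ‖g j‖ ^ 2 - 2 * ⟪g j, w⟫ + ‖w‖ ^ 2 := by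
            intro j; rw [norm_sub_sq_real]
          rw [Finset.sum_congr rfl (fun j _ => this j)]
          rw [Finset.sum_add_distrib, Finset.sum_sub_distrib]
          have i1 : ∑ j, 2 * ⟪g j, w⟫ = 2 * ((n:ℝ) * ‖w‖ ^ 2) := by
            rw [← Finset.mul_sum, ← sum_inner, hsumg]
            rw [real_inner_smul_left, real_inner_self_eq_norm_sq]
          have i2 : ∑ _j : Fin n, ‖w‖ ^ 2 = (n:ℝ) * ‖w‖ ^ 2 := by
            rw [Finset.sum_const, Finset.card_univ, Fintype.card_fin, nsmul_eq_mul]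
          rw [i1, i2, hSdef]
          ring
        rw [hexpand]
        nlinarith [sq_nonneg ‖w‖, hn']
      linarith [e1.le, e2.le, e3]
    -- combine
    have hTsum : ∑ j, T (p ++ [j]) = ((n:ℝ) - 1) * (c * S)
        + ∑ j, (c * ‖G (p ++ [j]) j - ∇ (f j) xstar‖ ^ 2 + ‖X (p ++ [j]) - xstar‖ ^ 2) := by
      rw [Finset.sum_congr rfl (fun j _ => hTsplit j)]
      rw [Finset.sum_add_distrib, Finset.sum_sub_distrib]
      have e4 : ∑ _j : Fin n, c * S = (n:ℝ) * (c * S) := by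
        rw [Finset.sum_const, Finset.card_univ, Fintype.card_fin, nsmul_eq_mul]
      have e5 : ∑ j, c * ‖g j‖ ^ 2 = c * S := by
        rw [← Finset.mul_sum, hSdef]
      rw [e4, e5]
      ring
    have hsum2 : ∑ j, (c * ‖G (p ++ [j]) j - ∇ (f j) xstar‖ ^ 2
        + ‖X (p ++ [j]) - xstar‖ ^ 2)
        ≤ (1 / (1 + μ * γ)) * ((n:ℝ) * ‖X p - xstar‖ ^ 2 + γ ^ 2 * S) := by
      have hstep2 : ∀ j, c * ‖G (p ++ [j]) j - ∇ (f j) xstar‖ ^ 2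
          + ‖X (p ++ [j]) - xstar‖ ^ 2
          ≤ (1 / (1 + μ * γ)) * ‖z j - xstar - γ • ∇ (f j) xstar‖ ^ 2 := by
        intro j
        rw [one_div, inv_mul_eq_div]
        exact (le_div_iff₀' h1γ).mpr (hper j)
      calc ∑ j, (c * ‖G (p ++ [j]) j - ∇ (f j) xstar‖ ^ 2 + ‖X (p ++ [j]) - xstar‖ ^ 2)
          ≤ ∑ j, (1 / (1 + μ * γ)) * ‖z j - xstar - γ • ∇ (f j) xstar‖ ^ 2 :=
            Finset.sum_le_sum (fun j _ => hstep2 j)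
        _ = (1 / (1 + μ * γ)) * ∑ j, ‖z j - xstar - γ • ∇ (f j) xstar‖ ^ 2 := by
            rw [Finset.mul_sum]
        _ ≤ (1 / (1 + μ * γ)) * ((n:ℝ) * ‖X p - xstar‖ ^ 2 + γ ^ 2 * S) := by
            apply mul_le_mul_of_nonneg_left hvar (by positivity)
    -- final arithmetic of the step
    have hSnn : 0 ≤ S := by positivity
    have hfinal : ((n:ℝ) - 1) * (c * S)
        + (1 / (1 + μ * γ)) * ((n:ℝ) * ‖X p - xstar‖ ^ 2 + γ ^ 2 * S)
        ≤ ((n:ℝ) * (1 - κ)) * T p := by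
      have hTp : T p = c * S + ‖X p - xstar‖ ^ 2 := by
        simp only [hTdef, hSdef, hgdef]
      rw [hκ1, hTp]
      have hcval : c * (μ * L * n) = 1 := by rw [hcdef]; field_simp
      have hcoefS : ((n:ℝ) - 1) * c * (1 + μ * γ) + γ ^ 2 ≤ (n:ℝ) * c := by
        have h14 : ((n:ℝ) - 1) * (1 + μ * γ) * (c * (μ * L * n)) = ((n:ℝ)-1) * (1 + μ * γ) := by
          linear_combination (((n:ℝ)-1) * (1 + μ * γ)) * hcval
        have h15 : (n:ℝ) * (c * (μ * L * n)) = (n:ℝ) := by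
          linear_combination (n:ℝ) * hcval
        have h12 : (((n:ℝ) - 1) * c * (1 + μ * γ) + γ ^ 2) * (μ * L * n)
            ≤ ((n:ℝ) * c) * (μ * L * n) := by
          nlinarith [hquad, h14, h15]
        exact le_of_mul_le_mul_right h12 (by positivity)
      have h10 : ((n:ℝ) - 1) * (c * S)
            + 1 / (1 + μ * γ) * ((n:ℝ) * ‖X p - xstar‖ ^ 2 + γ ^ 2 * S)
          = ((1 + μ * γ) * (((n:ℝ) - 1) * (c * S))
            + ((n:ℝ) * ‖X p - xstar‖ ^ 2 + γ ^ 2 * S)) / (1 + μ * γ) := by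
        field_simp
      have h11 : (n:ℝ) * (1 / (1 + μ * γ)) * (c * S + ‖X p - xstar‖ ^ 2)
          = ((n:ℝ) * (c * S + ‖X p - xstar‖ ^ 2)) / (1 + μ * γ) := by
        field_simp
      rw [h10, h11]
      have h16 := mul_le_mul_of_nonneg_right hcoefS hSnn
      have h17 : (1 + μ * γ) * (((n:ℝ) - 1) * (c * S))
            + ((n:ℝ) * ‖X p - xstar‖ ^ 2 + γ ^ 2 * S)
          ≤ (n:ℝ) * (c * S + ‖X p - xstar‖ ^ 2) := by linarith only [h16]
      exact (div_le_div_iff_of_pos_right h1γ).mpr h17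
    calc ∑ j, T (p ++ [j]) = ((n:ℝ) - 1) * (c * S)
          + ∑ j, (c * ‖G (p ++ [j]) j - ∇ (f j) xstar‖ ^ 2 + ‖X (p ++ [j]) - xstar‖ ^ 2) :=
          hTsum
      _ ≤ ((n:ℝ) - 1) * (c * S)
          + (1 / (1 + μ * γ)) * ((n:ℝ) * ‖X p - xstar‖ ^ 2 + γ ^ 2 * S) := by linarith [hsum2]
      _ ≤ ((n:ℝ) * (1 - κ)) * T p := hfinal
  -- induction over histories
  have hind : ∀ m : ℕ, ∑ ω : Fin m → Fin n, T (List.ofFn ω) ≤ ((n:ℝ) * (1 - κ)) ^ m * T [] := by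
    intro m
    induction m with
    | zero => simp
    | succ m ih =>
      have he : ∑ ω : Fin (m+1) → Fin n, T (List.ofFn ω)
          = ∑ στ : Fin n × (Fin m → Fin n), T (List.ofFn (Fin.snoc στ.2 στ.1)) := by
        rw [← Equiv.sum_comp (Fin.snocEquiv (fun _ => Fin n))]
        apply Finset.sum_congr rfl
        intro στ _
        congr 1
      rw [he]
      have hofn : ∀ (σ : Fin m → Fin n) (j : Fin n),
          List.ofFn (Fin.snoc σ j) = List.ofFn σ ++ [j] := by
        intro σ j
        rw [List.ofFn_succ']
        simp [List.concat_eq_append]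
      rw [Fintype.sum_prod_type]
      rw [Finset.sum_comm]
      calc ∑ σ : Fin m → Fin n, ∑ j : Fin n, T (List.ofFn (Fin.snoc σ j))
          = ∑ σ : Fin m → Fin n, ∑ j : Fin n, T (List.ofFn σ ++ [j]) := by
            apply Finset.sum_congr rfl; intro σ _; apply Finset.sum_congr rfl; intro j _
            rw [hofn]
        _ ≤ ∑ σ : Fin m → Fin n, ((n:ℝ) * (1 - κ)) * T (List.ofFn σ) :=
            Finset.sum_le_sum (fun σ _ => hstepT (List.ofFn σ))
        _ = ((n:ℝ) * (1 - κ)) * ∑ σ : Fin m → Fin n, T (List.ofFn σ) := by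
            rw [Finset.mul_sum]
        _ ≤ ((n:ℝ) * (1 - κ)) * (((n:ℝ) * (1 - κ)) ^ m * T []) := by
            apply mul_le_mul_of_nonneg_left ih (by positivity)
        _ = ((n:ℝ) * (1 - κ)) ^ (m + 1) * T [] := by ring
  -- initial bound
  have hT0 : T [] ≤ (μ + L) / μ * ‖x0 - xstar‖ ^ 2 := by
    have hb : ∀ i : Fin n, ‖G [] i - ∇ (f i) xstar‖ ^ 2 ≤ L ^ 2 * ‖x0 - xstar‖ ^ 2 := by
      intro i
      rw [hG0 i]
      have h := hlip' i x0 xstar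
      nlinarith [norm_nonneg (∇ (f i) x0 - ∇ (f i) xstar), norm_nonneg (x0 - xstar), h, hL]
    have hsb : ∑ i, ‖G [] i - ∇ (f i) xstar‖ ^ 2 ≤ (n:ℝ) * (L ^ 2 * ‖x0 - xstar‖ ^ 2) := by
      calc ∑ i, ‖G [] i - ∇ (f i) xstar‖ ^ 2 ≤ ∑ _i : Fin n, L ^ 2 * ‖x0 - xstar‖ ^ 2 :=
            Finset.sum_le_sum (fun i _ => hb i)
        _ = (n:ℝ) * (L ^ 2 * ‖x0 - xstar‖ ^ 2) := by
            rw [Finset.sum_const, Finset.card_univ, Fintype.card_fin, nsmul_eq_mul]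
      
    have hceq : c * ((n:ℝ) * (L ^ 2 * ‖x0 - xstar‖ ^ 2)) = L / μ * ‖x0 - xstar‖ ^ 2 := by
      rw [hcdef]; field_simp
    simp only [hTdef, hX0]
    have := mul_le_mul_of_nonneg_left hsb hc.le
    rw [hceq] at this
    have hend : L / μ * ‖x0 - xstar‖ ^ 2 + ‖x0 - xstar‖ ^ 2
        = (μ + L) / μ * ‖x0 - xstar‖ ^ 2 := by field_simp; ring
    linarith [this, hend.le, hend.ge]
  -- conclusion
  have hX2 : ∑ ω : Fin k → Fin n, ‖X (List.ofFn ω) - xstar‖ ^ 2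
      ≤ ((n:ℝ) * (1 - κ)) ^ k * T [] :=
    le_trans (Finset.sum_le_sum (fun ω _ => hTge (List.ofFn ω))) (hind k)
  have hpk : (0:ℝ) < (n:ℝ) ^ k := by positivity
  calc (1 / (n : ℝ) ^ k) * ∑ ω : Fin k → Fin n, ‖X (List.ofFn ω) - xstar‖ ^ 2
      ≤ (1 / (n : ℝ) ^ k) * (((n:ℝ) * (1 - κ)) ^ k * T []) := by
        apply mul_le_mul_of_nonneg_left hX2 (by positivity)
    _ = (1 - κ) ^ k * T [] := by
        rw [mul_pow]
        field_simp
    _ ≤ (1 - κ) ^ k * ((μ + L) / μ * ‖x0 - xstar‖ ^ 2) := by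
        apply mul_le_mul_of_nonneg_left hT0 (by positivity)
    _ = (1 - κ) ^ k * ((μ + L) / μ) * ‖x0 - xstar‖ ^ 2 := by ring
end

section
/- Suppose each f_i : ℝ^d → ℝ is μ-strongly convex (possibly non-smooth), ‖g_i^0 - g_i*‖ ≤ B for all i, and ‖x^0 - x*‖ ≤ R. Run Point-SAGA with step size γ = R/(B√n). Then the averaged iterate x̄^k = (1/k)Σ_{t=1}^k x^t satisfies E‖x̄^k - x*‖² ≤ 2√n(1 + μR/(B√n))/(μk) · RB. -/
open RealInnerProductSpace Finset

/-- `g` is a subgradient of `f` at `x`. -/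
def IsSubgradient {d : ℕ} (f : EuclideanSpace ℝ (Fin d) → ℝ)
    (x g : EuclideanSpace ℝ (Fin d)) : Prop :=
  ∀ y, f x + ⟪g, y - x⟫ ≤ f y

lemma subgrad_strong {d : ℕ} {μ : ℝ} {f : EuclideanSpace ℝ (Fin d) → ℝ}
    (hf : StrongConvexOn Set.univ μ f) {x g : EuclideanSpace ℝ (Fin d)}
    (hg : IsSubgradient f x g) (hμ : 0 ≤ μ) (y : EuclideanSpace ℝ (Fin d)) :
    f x + ⟪g, y - x⟫ + μ / 2 * ‖y - x‖ ^ 2 ≤ f y := by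
  refine le_of_forall_pos_le_add fun ε hε => ?_
  set c : ℝ := μ / 2 * ‖y - x‖ ^ 2 with hc
  have hc0 : 0 ≤ c := by positivity
  set t : ℝ := min (1/2) (ε / (c + 1)) with ht
  have ht0 : 0 < t := lt_min (by norm_num) (by positivity)
  have ht1 : t ≤ 1/2 := min_le_left _ _
  have key := hf.2 (Set.mem_univ x) (Set.mem_univ y)
    (show (0:ℝ) ≤ 1 - t by linarith) ht0.le (by ring)
  have hsub := hg ((1-t) • x + t • y)
  have heq : ((1-t) • x + t • y) - x = t • (y - x) := by
    rw [sub_smul, one_smul, smul_sub]; abel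
  rw [heq, real_inner_smul_right] at hsub
  have h2 : f x + t * ⟪g, y - x⟫ ≤ (1-t) * f x + t * f y - (1-t)*t*(μ/2*‖x-y‖^2) :=
    le_trans hsub key
  rw [norm_sub_rev x y] at h2
  have h3' : t * (f x + ⟪g, y - x⟫ + (1-t) * c) ≤ t * f y := by rw [hc]; nlinarith
  have h3 : f x + ⟪g, y - x⟫ + (1-t) * c ≤ f y := le_of_mul_le_mul_left h3' ht0
  have htc : t * c ≤ ε := by
    calc t * c ≤ (ε / (c+1)) * c := mul_le_mul_of_nonneg_right (min_le_right _ _) hc0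
    _ ≤ ε := by rw [div_mul_eq_mul_div, div_le_iff₀ (by linarith)]; nlinarith
  linarith

lemma prox_subgrad {d : ℕ} {γ : ℝ} (hγ : 0 < γ) {f : EuclideanSpace ℝ (Fin d) → ℝ}
    (hf : ConvexOn ℝ Set.univ f) {z p : EuclideanSpace ℝ (Fin d)}
    (hp : IsProx γ f z p) : IsSubgradient f p ((1 / γ) • (z - p)) := by
  intro y
  rw [real_inner_smul_left]
  refine le_of_forall_pos_le_add fun ε hε => ?_
  set c : ℝ := ‖y - p‖ ^ 2 / (2 * γ) with hc
  have hc0 : 0 ≤ c := by positivity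
  set t : ℝ := min (1/2) (ε / (c + 1)) with ht
  have ht0 : 0 < t := lt_min (by norm_num) (by positivity)
  have ht1 : t ≤ 1/2 := min_le_left _ _
  have key := hp ((1-t) • p + t • y)
  have heq : z - ((1-t) • p + t • y) = (z - p) - t • (y - p) := by
    rw [sub_smul, one_smul, smul_sub]; abel
  have hexp : ‖(z - p) - t • (y - p)‖ ^ 2
      = ‖z - p‖^2 - 2 * (t * ⟪z - p, y - p⟫) + t^2 * ‖y - p‖^2 := by
    rw [norm_sub_sq_real, real_inner_smul_right, norm_smul, Real.norm_eq_abs,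
      abs_of_pos ht0, mul_pow]
  rw [heq, hexp] at key
  have hcvx := hf.2 (Set.mem_univ p) (Set.mem_univ y)
    (show (0:ℝ) ≤ 1 - t by linarith) ht0.le (by ring)
  simp only [smul_eq_mul] at hcvx
  have h2 : γ * f p + ‖z - p‖^2/2 ≤ γ * ((1-t) * f p + t * f y)
      + (‖z - p‖^2 - 2 * (t * ⟪z - p, y - p⟫) + t^2 * ‖y - p‖^2)/2 := by
    refine le_trans key ?_
    have := mul_le_mul_of_nonneg_left hcvx hγ.le
    nlinarith [this]
  have h5 : t * (γ * f p + ⟪z - p, y - p⟫) ≤ t * (γ * f y + t * (‖y - p‖^2/2)) := by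
    nlinarith [h2]
  have hmain : γ * f p + ⟪z - p, y - p⟫ ≤ γ * f y + t * (‖y - p‖^2/2) :=
    le_of_mul_le_mul_left h5 ht0
  have hγ' : γ ≠ 0 := hγ.ne'
  have h6 := (div_le_div_iff_of_pos_right hγ).mpr hmain
  have e1 : (γ * f p + ⟪z - p, y - p⟫)/γ = f p + (1/γ) * ⟪z - p, y - p⟫ := by
    field_simp
  have e2 : (γ * f y + t * (‖y - p‖^2/2))/γ = f y + t * c := by
    rw [hc]; field_simp
  rw [e1, e2] at h6
  have htc : t * c ≤ ε := by
    calc t * c ≤ (ε / (c+1)) * c := mul_le_mul_of_nonneg_right (min_le_right _ _) hc0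
    _ ≤ ε := by rw [div_mul_eq_mul_div, div_le_iff₀ (by linarith)]; nlinarith
  linarith

set_option maxHeartbeats 1000000 in
theorem point_saga_nonsmooth_rate {d n : ℕ} (hn : 0 < n) (μ B R : ℝ)
    (hμ : 0 < μ) (hB : 0 < B) (hR : 0 < R)
    (f : Fin n → EuclideanSpace ℝ (Fin d) → ℝ)
    (hconv : ∀ i, StrongConvexOn Set.univ μ (f i))
    (xstar : EuclideanSpace ℝ (Fin d))
    (hmin : ∀ y, (1 / (n : ℝ)) * ∑ i, f i xstar ≤ (1 / (n : ℝ)) * ∑ i, f i y)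
    (gstar : Fin n → EuclideanSpace ℝ (Fin d))
    (hgstar : ∀ i, IsSubgradient (f i) xstar (gstar i))
    (hgsum : ∑ i, gstar i = 0)
    (γ : ℝ) (hγ : γ = R / (B * Real.sqrt n))
    (x0 : EuclideanSpace ℝ (Fin d)) (g0 : Fin n → EuclideanSpace ℝ (Fin d))
    (hg0 : ∀ i, IsSubgradient (f i) x0 (g0 i))
    (hg0B : ∀ i, ‖g0 i - gstar i‖ ≤ B)
    (hx0R : ‖x0 - xstar‖ ≤ R)
    -- the iterates and gradient tables, indexed by the history of sampled indices
    (X : List (Fin n) → EuclideanSpace ℝ (Fin d))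
    (G : List (Fin n) → Fin n → EuclideanSpace ℝ (Fin d))
    (hX0 : X [] = x0) (hG0 : ∀ i, G [] i = g0 i)
    (hstep : ∀ (p : List (Fin n)) (j : Fin n),
      IsProx γ (f j) (X p + γ • (G p j - (1 / (n : ℝ)) • ∑ i, G p i)) (X (p ++ [j])))
    (hupd : ∀ (p : List (Fin n)) (j : Fin n),
      G (p ++ [j]) j = (1 / γ) •
        ((X p + γ • (G p j - (1 / (n : ℝ)) • ∑ i, G p i)) - X (p ++ [j])))
    (hupd' : ∀ (p : List (Fin n)) (j i : Fin n), i ≠ j → G (p ++ [j]) i = G p i)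
    (k : ℕ) (hk : 0 < k) :
    (1 / (n : ℝ) ^ k) * ∑ ω : Fin k → Fin n,
        ‖(1 / (k : ℝ)) • ∑ t ∈ Finset.Icc 1 k, X ((List.ofFn ω).take t) - xstar‖ ^ 2 ≤
      2 * (Real.sqrt n * (1 + μ * (R / (B * Real.sqrt n)))) / (μ * k) * (R * B) := by
  have hn' : (0:ℝ) < n := by exact_mod_cast hn
  have hsn : (0:ℝ) < Real.sqrt n := Real.sqrt_pos.mpr hn'
  have hγ0 : 0 < γ := by rw [hγ]; positivity
  set L : List (Fin n) → ℝ :=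
    fun p => ‖X p - xstar‖^2 + γ^2 * ∑ i, ‖G p i - gstar i‖^2 with hLdef
  have hL0 : ∀ p, 0 ≤ L p := by
    intro p
    have : (0:ℝ) ≤ ∑ i, ‖G p i - gstar i‖^2 := Finset.sum_nonneg fun i _ => by positivity
    simp only [hLdef]; positivity
  -- new table entry is a subgradient at the new point
  have hsubg : ∀ p (j : Fin n), IsSubgradient (f j) (X (p ++ [j])) (G (p ++ [j]) j) := by
    intro p j
    rw [hupd p j]
    exact prox_subgrad hγ0 (strongConvexOn_zero.mp ((hconv j).mono hμ.le)) (hstep p j)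
  -- strong monotonicity of subgradients
  have hmono : ∀ p (j : Fin n),
      μ * ‖X (p++[j]) - xstar‖^2 ≤ ⟪G (p++[j]) j - gstar j, X (p++[j]) - xstar⟫ := by
    intro p j
    have h1 := subgrad_strong (hconv j) (hsubg p j) hμ.le xstar
    have h2 := subgrad_strong (hconv j) (hgstar j) hμ.le (X (p++[j]))
    rw [norm_sub_rev xstar (X (p++[j]))] at h1
    have e : ⟪G (p++[j]) j, xstar - X (p++[j])⟫
        = -⟪G (p++[j]) j, X (p++[j]) - xstar⟫ := by
      rw [← inner_neg_right]; congr 1; abel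
    rw [e] at h1
    rw [inner_sub_left]
    linarith
  -- per-sample inequality
  have hperj : ∀ p (j : Fin n),
      2*γ*μ * ‖X (p ++ [j]) - xstar‖^2 + L (p ++ [j]) ≤
        ‖(X p - xstar) + γ • ((G p j - gstar j) - (1/(n:ℝ)) • ∑ i, G p i)‖^2
          + γ^2 * ∑ i, ‖G p i - gstar i‖^2 - γ^2 * ‖G p j - gstar j‖^2 := by
    intro p j
    have hγg : γ • G (p ++ [j]) j
        = (X p + γ • (G p j - (1/(n:ℝ)) • ∑ i, G p i)) - X (p ++ [j]) := by
      rw [hupd p j, smul_smul, mul_one_div, div_self hγ0.ne', one_smul]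
    have hzw : (X p - xstar) + γ • ((G p j - gstar j) - (1/(n:ℝ)) • ∑ i, G p i)
        = (X (p ++ [j]) - xstar) + γ • (G (p ++ [j]) j - gstar j) := by
      rw [smul_sub γ (G (p++[j]) j) (gstar j), hγg]
      simp only [smul_sub]
      abel
    have hexp : ‖(X (p ++ [j]) - xstar) + γ • (G (p ++ [j]) j - gstar j)‖^2
        = ‖X (p ++ [j]) - xstar‖^2
          + 2*γ*⟪G (p ++ [j]) j - gstar j, X (p ++ [j]) - xstar⟫
          + γ^2 * ‖G (p ++ [j]) j - gstar j‖^2 := by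
      rw [norm_add_sq_real, real_inner_smul_right, real_inner_comm, norm_smul,
        Real.norm_eq_abs, mul_pow, sq_abs]
      ring
    have hsum' : ∑ i, ‖G (p++[j]) i - gstar i‖^2
        = (∑ i, ‖G p i - gstar i‖^2) - ‖G p j - gstar j‖^2
          + ‖G (p++[j]) j - gstar j‖^2 := by
      have hdiff : ∑ i, (‖G (p++[j]) i - gstar i‖^2 - ‖G p i - gstar i‖^2)
          = ‖G (p++[j]) j - gstar j‖^2 - ‖G p j - gstar j‖^2 := by
        rw [Finset.sum_eq_single_of_mem j (Finset.mem_univ j)]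
        intro i _ hij
        rw [hupd' p j i hij]; ring
      rw [Finset.sum_sub_distrib] at hdiff
      linarith
    rw [hzw, hexp]
    simp only [hLdef]
    rw [hsum']
    have hm := mul_le_mul_of_nonneg_left (hmono p j) (by positivity : (0:ℝ) ≤ 2*γ)
    nlinarith [hm]
  -- variance bound
  have hvar : ∀ p, ∑ j, ‖(X p - xstar) + γ • ((G p j - gstar j) - (1/(n:ℝ)) • ∑ i, G p i)‖^2
      ≤ (n:ℝ) * ‖X p - xstar‖^2 + γ^2 * ∑ j, ‖G p j - gstar j‖^2 := by
    intro p
    set c := X p - xstar with hc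
    set m := (1/(n:ℝ)) • ∑ i, G p i with hm
    have hsumu : ∑ j, (G p j - gstar j) = (n:ℝ) • m := by
      rw [Finset.sum_sub_distrib, hgsum, sub_zero, hm, smul_smul, mul_one_div,
        div_self hn'.ne', one_smul]
    have hsumv : ∑ j, ((G p j - gstar j) - m) = 0 := by
      rw [Finset.sum_sub_distrib, hsumu, Finset.sum_const, Finset.card_univ,
        Fintype.card_fin, ← Nat.cast_smul_eq_nsmul ℝ]
      abel
    have hexpand : ∀ j : Fin n, ‖c + γ • ((G p j - gstar j) - m)‖^2
        = ‖c‖^2 + 2*γ*⟪c, (G p j - gstar j) - m⟫ + γ^2 * ‖(G p j - gstar j) - m‖^2 := by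
      intro j
      rw [norm_add_sq_real, real_inner_smul_right, norm_smul, Real.norm_eq_abs,
        mul_pow, sq_abs]
      ring
    have hcross : ∑ j, ⟪c, (G p j - gstar j) - m⟫ = 0 := by
      rw [← inner_sum, hsumv, inner_zero_right]
    have hL5 : ∑ j, ‖(G p j - gstar j) - m‖^2 ≤ ∑ j, ‖G p j - gstar j‖^2 := by
      have h1 : ∀ j : Fin n, ‖(G p j - gstar j) - m‖^2
          = ‖G p j - gstar j‖^2 - 2*⟪G p j - gstar j, m⟫ + ‖m‖^2 := fun j =>
        norm_sub_sq_real _ _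
      have h2 : ∑ j, ⟪G p j - gstar j, m⟫ = (n:ℝ) * ‖m‖^2 := by
        rw [← sum_inner, hsumu, real_inner_smul_left, real_inner_self_eq_norm_sq]
      have h3 : ∑ j, ‖(G p j - gstar j) - m‖^2
          = ∑ j, ‖G p j - gstar j‖^2 - 2*((n:ℝ) * ‖m‖^2) + (n:ℝ) * ‖m‖^2 := by
        simp only [h1]
        rw [Finset.sum_add_distrib, Finset.sum_sub_distrib, ← Finset.mul_sum, h2,
          Finset.sum_const, Finset.card_univ, Fintype.card_fin, nsmul_eq_mul]
      have h4 : (0:ℝ) ≤ (n:ℝ) * ‖m‖^2 := by positivity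
      linarith
    have h5 : ∑ j, ‖c + γ • ((G p j - gstar j) - m)‖^2
        = (n:ℝ) * ‖c‖^2 + 2*γ*(∑ j, ⟪c, (G p j - gstar j) - m⟫)
          + γ^2 * ∑ j, ‖(G p j - gstar j) - m‖^2 := by
      simp only [hexpand]
      rw [Finset.sum_add_distrib, Finset.sum_add_distrib, Finset.sum_const,
        Finset.card_univ, Fintype.card_fin, nsmul_eq_mul, ← Finset.mul_sum, ← Finset.mul_sum]
    rw [h5, hcross]
    have := mul_le_mul_of_nonneg_left hL5 (by positivity : (0:ℝ) ≤ γ^2)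
    linarith
  -- averaged one-step inequality
  have stepavg : ∀ p, (1/(n:ℝ)) * ∑ j, (2*γ*μ * ‖X (p ++ [j]) - xstar‖^2 + L (p ++ [j])) ≤ L p := by
    intro p
    have h1 : ∑ j, (2*γ*μ * ‖X (p ++ [j]) - xstar‖^2 + L (p ++ [j]))
        ≤ ∑ j, (‖(X p - xstar) + γ • ((G p j - gstar j) - (1/(n:ℝ)) • ∑ i, G p i)‖^2
          + γ^2 * ∑ i, ‖G p i - gstar i‖^2 - γ^2 * ‖G p j - gstar j‖^2) :=
      Finset.sum_le_sum fun j _ => hperj p j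
    have h2 : ∑ j, (‖(X p - xstar) + γ • ((G p j - gstar j) - (1/(n:ℝ)) • ∑ i, G p i)‖^2
          + γ^2 * ∑ i, ‖G p i - gstar i‖^2 - γ^2 * ‖G p j - gstar j‖^2)
        = (∑ j, ‖(X p - xstar) + γ • ((G p j - gstar j) - (1/(n:ℝ)) • ∑ i, G p i)‖^2)
          + (n:ℝ) * (γ^2 * ∑ i, ‖G p i - gstar i‖^2) - γ^2 * ∑ j, ‖G p j - gstar j‖^2 := by
      rw [Finset.sum_sub_distrib, Finset.sum_add_distrib, Finset.sum_const,
        Finset.card_univ, Fintype.card_fin, nsmul_eq_mul, ← Finset.mul_sum]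
    have h3 := hvar p
    have h4 : ∑ j, (2*γ*μ * ‖X (p ++ [j]) - xstar‖^2 + L (p ++ [j])) ≤ (n:ℝ) * L p := by
      simp only [hLdef]
      rw [h2] at h1
      nlinarith [h1, h3]
    calc (1/(n:ℝ)) * ∑ j, (2*γ*μ * ‖X (p ++ [j]) - xstar‖^2 + L (p ++ [j]))
        ≤ (1/(n:ℝ)) * ((n:ℝ) * L p) := by
          apply mul_le_mul_of_nonneg_left h4 (by positivity)
      _ = L p := by field_simp
  -- expectation over histories: telescoped Lyapunov bound
  have key : ∀ (m : ℕ) (p : List (Fin n)),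
      (1/(n:ℝ)^m) * ∑ ω : Fin m → Fin n,
        (2*γ*μ * ∑ t ∈ Finset.Icc 1 m, ‖X (p ++ (List.ofFn ω).take t) - xstar‖^2
          + L (p ++ List.ofFn ω)) ≤ L p := by
    intro m
    induction m with
    | zero =>
      intro p
      simp
    | succ m ih =>
      intro p
      have hre : ∑ ω : Fin (m+1) → Fin n,
          (2*γ*μ * ∑ t ∈ Finset.Icc 1 (m+1), ‖X (p ++ (List.ofFn ω).take t) - xstar‖^2
            + L (p ++ List.ofFn ω))
          = ∑ j : Fin n, ∑ ω : Fin m → Fin n,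
            (2*γ*μ * ‖X (p ++ [j]) - xstar‖^2
              + (2*γ*μ * ∑ t ∈ Finset.Icc 1 m, ‖X ((p ++ [j]) ++ (List.ofFn ω).take t) - xstar‖^2
                + L ((p ++ [j]) ++ List.ofFn ω))) := by
        rw [← Equiv.sum_comp (Fin.consEquiv (fun _ : Fin (m+1) => Fin n))
          (fun ω : Fin (m+1) → Fin n =>
            2*γ*μ * ∑ t ∈ Finset.Icc 1 (m+1), ‖X (p ++ (List.ofFn ω).take t) - xstar‖^2
              + L (p ++ List.ofFn ω)), Fintype.sum_prod_type]
        refine Finset.sum_congr rfl fun j _ => Finset.sum_congr rfl fun ω _ => ?_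
        have hofn : List.ofFn (Fin.consEquiv (fun _ : Fin (m+1) => Fin n) (j, ω))
            = j :: List.ofFn ω := by
          simp [Fin.consEquiv, List.ofFn_succ]
        rw [hofn]
        have htime : ∑ t ∈ Finset.Icc 1 (m+1), ‖X (p ++ (j :: List.ofFn ω).take t) - xstar‖^2
            = ‖X (p ++ [j]) - xstar‖^2
              + ∑ t ∈ Finset.Icc 1 m, ‖X ((p ++ [j]) ++ (List.ofFn ω).take t) - xstar‖^2 := by
          have e1 : Finset.Icc 1 (m+1) = Finset.Ico 1 (m+2) := by rw [← Finset.Ico_add_one_right_eq_Icc]; rfl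
          have e2 : Finset.Icc 1 m = Finset.Ico 1 (m+1) := by rw [Finset.Ico_add_one_right_eq_Icc]
          rw [e1, e2, Finset.sum_Ico_eq_sum_range, Finset.sum_Ico_eq_sum_range]
          simp only [show m+2-1 = m+1 from rfl, show m+1-1 = m from rfl]
          rw [Finset.sum_range_succ', add_comm]
          congr 1
          refine Finset.sum_congr rfl fun i _ => ?_
          have e3 : 1 + (i+1) = (1+i) + 1 := by omega
          rw [e3, List.take_succ_cons]
          simp
        rw [htime]
        have happ : p ++ (j :: List.ofFn ω) = (p ++ [j]) ++ List.ofFn ω := by simp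
        rw [happ]
        ring
      rw [hre]
      have hcard : (Fintype.card (Fin m → Fin n) : ℝ) = (n:ℝ)^m := by
        rw [Fintype.card_fun, Fintype.card_fin, Fintype.card_fin]; push_cast; ring
      have hsplit : ∀ j : Fin n, ∑ ω : Fin m → Fin n,
          (2*γ*μ * ‖X (p ++ [j]) - xstar‖^2
            + (2*γ*μ * ∑ t ∈ Finset.Icc 1 m, ‖X ((p ++ [j]) ++ (List.ofFn ω).take t) - xstar‖^2
              + L ((p ++ [j]) ++ List.ofFn ω)))
          = (n:ℝ)^m * (2*γ*μ * ‖X (p ++ [j]) - xstar‖^2)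
            + ∑ ω : Fin m → Fin n,
              (2*γ*μ * ∑ t ∈ Finset.Icc 1 m, ‖X ((p ++ [j]) ++ (List.ofFn ω).take t) - xstar‖^2
                + L ((p ++ [j]) ++ List.ofFn ω)) := by
        intro j
        rw [Finset.sum_add_distrib, Finset.sum_const, Finset.card_univ, nsmul_eq_mul, hcard]
      have hre2 : ∑ j : Fin n, ∑ ω : Fin m → Fin n,
          (2*γ*μ * ‖X (p ++ [j]) - xstar‖^2
            + (2*γ*μ * ∑ t ∈ Finset.Icc 1 m, ‖X ((p ++ [j]) ++ (List.ofFn ω).take t) - xstar‖^2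
              + L ((p ++ [j]) ++ List.ofFn ω)))
          = ∑ j : Fin n, ((n:ℝ)^m * (2*γ*μ * ‖X (p ++ [j]) - xstar‖^2)
            + ∑ ω : Fin m → Fin n,
              (2*γ*μ * ∑ t ∈ Finset.Icc 1 m, ‖X ((p ++ [j]) ++ (List.ofFn ω).take t) - xstar‖^2
                + L ((p ++ [j]) ++ List.ofFn ω))) :=
        Finset.sum_congr rfl fun j _ => hsplit j
      rw [hre2]
      have halg : (1/(n:ℝ)^(m+1)) * ∑ j : Fin n,
          ((n:ℝ)^m * (2*γ*μ * ‖X (p ++ [j]) - xstar‖^2)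
            + ∑ ω : Fin m → Fin n,
              (2*γ*μ * ∑ t ∈ Finset.Icc 1 m, ‖X ((p ++ [j]) ++ (List.ofFn ω).take t) - xstar‖^2
                + L ((p ++ [j]) ++ List.ofFn ω)))
          = (1/(n:ℝ)) * ∑ j : Fin n,
            (2*γ*μ * ‖X (p ++ [j]) - xstar‖^2
              + (1/(n:ℝ)^m) * ∑ ω : Fin m → Fin n,
                (2*γ*μ * ∑ t ∈ Finset.Icc 1 m, ‖X ((p ++ [j]) ++ (List.ofFn ω).take t) - xstar‖^2
                  + L ((p ++ [j]) ++ List.ofFn ω))) := by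
        rw [Finset.mul_sum, Finset.mul_sum]
        refine Finset.sum_congr rfl fun j _ => ?_
        have hnm : ((n:ℝ)^m) ≠ 0 := by positivity
        field_simp
        ring
      rw [halg]
      calc (1/(n:ℝ)) * ∑ j : Fin n,
            (2*γ*μ * ‖X (p ++ [j]) - xstar‖^2
              + (1/(n:ℝ)^m) * ∑ ω : Fin m → Fin n,
                (2*γ*μ * ∑ t ∈ Finset.Icc 1 m, ‖X ((p ++ [j]) ++ (List.ofFn ω).take t) - xstar‖^2
                  + L ((p ++ [j]) ++ List.ofFn ω)))
          ≤ (1/(n:ℝ)) * ∑ j : Fin n, (2*γ*μ * ‖X (p ++ [j]) - xstar‖^2 + L (p ++ [j])) := by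
            refine mul_le_mul_of_nonneg_left (Finset.sum_le_sum fun j _ => ?_) (by positivity)
            exact add_le_add_right (ih (p ++ [j])) _
        _ ≤ L p := stepavg p
  -- specialize to empty prefix
  have hkey := key k []
  simp only [List.nil_append] at hkey
  -- initial Lyapunov bound
  have hLinit : L [] ≤ 2 * R^2 := by
    have h1 : ‖X [] - xstar‖^2 ≤ R^2 := by
      rw [hX0]; nlinarith [hx0R, norm_nonneg (x0 - xstar)]
    have h2 : ∑ i, ‖G [] i - gstar i‖^2 ≤ (n:ℝ) * B^2 := by
      calc ∑ i, ‖G [] i - gstar i‖^2 ≤ ∑ _i : Fin n, B^2 :=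
            Finset.sum_le_sum fun i _ => by
              rw [hG0 i]; nlinarith [hg0B i, norm_nonneg (g0 i - gstar i)]
        _ = (n:ℝ) * B^2 := by
            rw [Finset.sum_const, Finset.card_univ, Fintype.card_fin, nsmul_eq_mul]
    have h3 : γ^2 * ((n:ℝ) * B^2) = R^2 := by
      rw [hγ, div_pow, mul_pow, Real.sq_sqrt hn'.le]
      field_simp
    have h4 := mul_le_mul_of_nonneg_left h2 (sq_nonneg γ)
    simp only [hLdef]
    linarith
  -- drop the Lyapunov term
  have hT : 2*γ*μ * ((1/(n:ℝ)^k) * ∑ ω : Fin k → Fin n,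
      ∑ t ∈ Finset.Icc 1 k, ‖X ((List.ofFn ω).take t) - xstar‖^2) ≤ 2 * R^2 := by
    have h1 : ∑ ω : Fin k → Fin n,
        (2*γ*μ * ∑ t ∈ Finset.Icc 1 k, ‖X ((List.ofFn ω).take t) - xstar‖^2)
        ≤ ∑ ω : Fin k → Fin n,
          (2*γ*μ * ∑ t ∈ Finset.Icc 1 k, ‖X ((List.ofFn ω).take t) - xstar‖^2
            + L (List.ofFn ω)) :=
      Finset.sum_le_sum fun ω _ => by linarith [hL0 (List.ofFn ω)]
    have h2 := le_trans (mul_le_mul_of_nonneg_left h1 (by positivity :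
      (0:ℝ) ≤ 1/(n:ℝ)^k)) (le_trans hkey hLinit)
    rw [← Finset.mul_sum] at h2
    nlinarith [h2]
  have hk' : (0:ℝ) < k := by exact_mod_cast hk
  -- Jensen
  have hjensen : ∀ ω : Fin k → Fin n,
      ‖(1/(k:ℝ)) • ∑ t ∈ Finset.Icc 1 k, X ((List.ofFn ω).take t) - xstar‖^2
        ≤ (1/(k:ℝ)) * ∑ t ∈ Finset.Icc 1 k, ‖X ((List.ofFn ω).take t) - xstar‖^2 := by
    intro ω
    have hcard : (Finset.Icc 1 k).card = k := by rw [Nat.card_Icc]; omega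
    have h1 : (1/(k:ℝ)) • ∑ t ∈ Finset.Icc 1 k, X ((List.ofFn ω).take t) - xstar
        = (1/(k:ℝ)) • ∑ t ∈ Finset.Icc 1 k, (X ((List.ofFn ω).take t) - xstar) := by
      rw [Finset.sum_sub_distrib, smul_sub, Finset.sum_const, hcard,
        ← Nat.cast_smul_eq_nsmul ℝ, smul_smul, one_div, inv_mul_cancel₀ hk'.ne', one_smul]
    rw [h1, norm_smul, Real.norm_eq_abs, mul_pow, sq_abs]
    have h2 : ‖∑ t ∈ Finset.Icc 1 k, (X ((List.ofFn ω).take t) - xstar)‖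
        ≤ ∑ t ∈ Finset.Icc 1 k, ‖X ((List.ofFn ω).take t) - xstar‖ :=
      norm_sum_le _ _
    have h3 : (∑ t ∈ Finset.Icc 1 k, ‖X ((List.ofFn ω).take t) - xstar‖)^2
        ≤ (k:ℝ) * ∑ t ∈ Finset.Icc 1 k, ‖X ((List.ofFn ω).take t) - xstar‖^2 := by
      have h4 := sq_sum_le_card_mul_sum_sq (s := Finset.Icc 1 k)
        (f := fun t => ‖X ((List.ofFn ω).take t) - xstar‖)
      rw [hcard] at h4
      exact_mod_cast h4
    have h5 : ‖∑ t ∈ Finset.Icc 1 k, (X ((List.ofFn ω).take t) - xstar)‖^2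
        ≤ (k:ℝ) * ∑ t ∈ Finset.Icc 1 k, ‖X ((List.ofFn ω).take t) - xstar‖^2 := by
      nlinarith [h2, norm_nonneg (∑ t ∈ Finset.Icc 1 k, (X ((List.ofFn ω).take t) - xstar)),
        Finset.sum_nonneg (fun t (_ : t ∈ Finset.Icc 1 k) =>
          norm_nonneg (X ((List.ofFn ω).take t) - xstar))]
    have h6 : (0:ℝ) < (1/(k:ℝ))^2 := by positivity
    calc (1/(k:ℝ))^2 * ‖∑ t ∈ Finset.Icc 1 k, (X ((List.ofFn ω).take t) - xstar)‖^2
        ≤ (1/(k:ℝ))^2 * ((k:ℝ) * ∑ t ∈ Finset.Icc 1 k, ‖X ((List.ofFn ω).take t) - xstar‖^2) :=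
          mul_le_mul_of_nonneg_left h5 h6.le
      _ = 1/(k:ℝ) * ∑ t ∈ Finset.Icc 1 k, ‖X ((List.ofFn ω).take t) - xstar‖^2 := by
          field_simp
  -- final assembly
  calc (1 / (n : ℝ) ^ k) * ∑ ω : Fin k → Fin n,
        ‖(1 / (k : ℝ)) • ∑ t ∈ Finset.Icc 1 k, X ((List.ofFn ω).take t) - xstar‖ ^ 2
      ≤ (1/(n:ℝ)^k) * ∑ ω : Fin k → Fin n,
          ((1/(k:ℝ)) * ∑ t ∈ Finset.Icc 1 k, ‖X ((List.ofFn ω).take t) - xstar‖^2) :=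
        mul_le_mul_of_nonneg_left (Finset.sum_le_sum fun ω _ => hjensen ω) (by positivity)
    _ = (1/(k:ℝ)) * ((1/(n:ℝ)^k) * ∑ ω : Fin k → Fin n,
          ∑ t ∈ Finset.Icc 1 k, ‖X ((List.ofFn ω).take t) - xstar‖^2) := by
        rw [← Finset.mul_sum]; ring
    _ ≤ R^2 / (γ*μ*(k:ℝ)) := by
        have hpos : (0:ℝ) ≤ (1/(n:ℝ)^k) * ∑ ω : Fin k → Fin n,
            ∑ t ∈ Finset.Icc 1 k, ‖X ((List.ofFn ω).take t) - xstar‖^2 := by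
          have : (0:ℝ) ≤ ∑ ω : Fin k → Fin n,
              ∑ t ∈ Finset.Icc 1 k, ‖X ((List.ofFn ω).take t) - xstar‖^2 :=
            Finset.sum_nonneg fun ω _ => Finset.sum_nonneg fun t _ => by positivity
          positivity
        set T := (1/(n:ℝ)^k) * ∑ ω : Fin k → Fin n,
          ∑ t ∈ Finset.Icc 1 k, ‖X ((List.ofFn ω).take t) - xstar‖^2 with hTdef
        rw [le_div_iff₀ (by positivity : (0:ℝ) < γ*μ*(k:ℝ))]
        have hkne : (k:ℝ) ≠ 0 := hk'.ne'
        have e : 1/(k:ℝ) * T * (γ*μ*(k:ℝ)) = γ*μ*T := by field_simp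
        rw [e]
        linarith [hT]
    _ ≤ 2 * (Real.sqrt n * (1 + μ * (R / (B * Real.sqrt n)))) / (μ * k) * (R * B) := by
        rw [hγ]
        have e : R^2/((R/(B*Real.sqrt n))*μ*(k:ℝ)) = Real.sqrt n * R * B/(μ*(k:ℝ)) := by
          field_simp
        rw [e, div_mul_eq_mul_div]
        rw [div_le_div_iff₀ (by positivity) (by positivity)]
        have hs : 0 ≤ μ * (R / (B * Real.sqrt n)) := by positivity
        nlinarith [mul_pos (mul_pos hsn hR) hB, mul_nonneg hs
          (mul_pos (mul_pos hsn hR) hB).le, mul_pos hμ hk']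
end
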